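/- If γ ⋖ τ is a covering relation in the Bruhat order restricted to a sect C_{p,q}^λ (equivalently, in the rank-tableau order on rook placements of shape λ), then the base clans agree: τ_γ = τ_τ, and τ is obtained from γ by one of the following pattern replacements applied at a free rise: (1) replacing a pattern −+ by a matched pair 11; (2) replacing −11 by 1−1 where the first 1 of the source is an excedance position; (3) replacing 11+ by 1+1; (4) replacing 1212 by 1221; (5) replacing 1122 by 1+−1. -/

import Mathlib

/-- A (p,q)-clan on `n = p+q` positions: an involution `π` (whose 2-cycles
are the matched pairs of natural numbers) together with signs at the fixed
points (`true` = `+`, `false` = `−`, normalised to `false` off fixed points). -/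
def Clan (n : ℕ) :=
  {x : Equiv.Perm (Fin n) × (Fin n → Bool) //
    x.1 * x.1 = 1 ∧ ∀ i, x.1 i ≠ i → x.2 i = false}

/-- The base clan: each matched pair becomes − at its first and + at its
second position. -/
def baseClan {n : ℕ} (γ : Clan n) : Fin n → Bool :=
  fun i => if i < γ.1.1 i then false else if γ.1.1 i < i then true else γ.1.2 i

/-- The sect of the matchless clan `b`. -/
def Sect {n : ℕ} (b : Fin n → Bool) := {γ : Clan n // baseClan γ = b}

/-- Position of the k-th minus sign of `b`. -/
noncomputable def minusPos {n q : ℕ} (b : Fin n → Bool)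
    (h : (Finset.univ.filter fun i => b i = false).card = q) (k : Fin q) :
    Fin n :=
  ((Finset.univ.filter fun i => b i = false).orderIsoOfFin h k : Fin n)

/-- Position of the l-th plus sign of `b`. -/
noncomputable def plusPos {n p : ℕ} (b : Fin n → Bool)
    (h : (Finset.univ.filter fun i => b i = true).card = p) (l : Fin p) :
    Fin n :=
  ((Finset.univ.filter fun i => b i = true).orderIsoOfFin h l : Fin n)

/-- The rank-tableau value of the rook placement of a sect clan at the
box (k,l): the number of matched pairs (k',l') with k' ≤ k and l' ≥ l
(rooks weakly northwest of the box in the drawn diagram). -/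
noncomputable def sectRank {p q : ℕ} (b : Fin (p + q) → Bool)
    (hbt : (Finset.univ.filter fun i => b i = true).card = p)
    (hbf : (Finset.univ.filter fun i => b i = false).card = q)
    (γ : Sect b) (k : Fin q) (l : Fin p) : ℕ :=
  (Finset.univ.filter fun z : Fin q × Fin p =>
    γ.1.1.1 (minusPos b hbf z.1) = plusPos b hbt z.2 ∧ z.1 ≤ k ∧ l ≤ z.2).card

/-- The Bruhat order on the sect, via the rank-tableau order on the rook
placements of shape λ (the boxes (k,l) of λ being those with i_k < j_l). -/
noncomputable def sectLe {p q : ℕ} (b : Fin (p + q) → Bool)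
    (hbt : (Finset.univ.filter fun i => b i = true).card = p)
    (hbf : (Finset.univ.filter fun i => b i = false).card = q)
    (γ τ : Sect b) : Prop :=
  ∀ k : Fin q, ∀ l : Fin p, minusPos b hbf k < plusPos b hbt l →
    sectRank b hbt hbf γ k l ≤ sectRank b hbt hbf τ k l

/-- A free rise (i,j) of an involution π. -/
def FreeRise {n : ℕ} (π : Equiv.Perm (Fin n)) (i j : Fin n) : Prop :=
  i < j ∧ π i < π j ∧ ∀ k, i < k → k < j → ¬ (π i < π k ∧ π k < π j)

/-- Move (1): replacing a pattern −+ (two fixed points) by a matched pair 11,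
at a free rise. -/
def Move1 {n : ℕ} (γ τ : Clan n) : Prop :=
  ∃ i j : Fin n, i < j ∧ γ.1.1 i = i ∧ γ.1.1 j = j ∧
    γ.1.2 i = false ∧ γ.1.2 j = true ∧ FreeRise γ.1.1 i j ∧
    τ.1.1 = γ.1.1 * Equiv.swap i j ∧
    (∀ x, x ≠ i → x ≠ j → τ.1.2 x = γ.1.2 x)

/-- Move (2): replacing −11 by 1−1 (fe-rise at a − sign at position i and the
excedance k of the pair (k, π k)), at the free rise (i,k). -/
def Move2 {n : ℕ} (γ τ : Clan n) : Prop :=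
  ∃ i k : Fin n, i < k ∧ γ.1.1 i = i ∧ γ.1.2 i = false ∧ k < γ.1.1 k ∧
    FreeRise γ.1.1 i k ∧
    τ.1.1 = Equiv.swap i k * γ.1.1 * Equiv.swap i k ∧
    τ.1.2 k = false ∧ (∀ x, x ≠ i → x ≠ k → τ.1.2 x = γ.1.2 x)

/-- Move (3): replacing 11+ by 1+1 (ef-rise at the excedance k of the pair
(k, π k) and a + sign at position j), at the free rise (k,j). -/
def Move3 {n : ℕ} (γ τ : Clan n) : Prop :=
  ∃ k j : Fin n, k < γ.1.1 k ∧ γ.1.1 k < j ∧ γ.1.1 j = j ∧ γ.1.2 j = true ∧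
    FreeRise γ.1.1 k j ∧
    τ.1.1 = Equiv.swap (γ.1.1 k) j * γ.1.1 * Equiv.swap (γ.1.1 k) j ∧
    τ.1.2 (γ.1.1 k) = true ∧ (∀ x, x ≠ γ.1.1 k → x ≠ j → τ.1.2 x = γ.1.2 x)

/-- Move (4): replacing 1212 by 1221 (non-crossing ee-rise), at the free rise
(k₁,k₂), where k₁ < k₂ < π k₁ < π k₂. -/
def Move4 {n : ℕ} (γ τ : Clan n) : Prop :=
  ∃ k₁ k₂ : Fin n, k₁ < k₂ ∧ k₂ < γ.1.1 k₁ ∧ γ.1.1 k₁ < γ.1.1 k₂ ∧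
    FreeRise γ.1.1 k₁ k₂ ∧
    τ.1.1 = Equiv.swap (γ.1.1 k₁) (γ.1.1 k₂) * γ.1.1 *
      Equiv.swap (γ.1.1 k₁) (γ.1.1 k₂) ∧
    (∀ x, τ.1.2 x = γ.1.2 x)

/-- Move (5): replacing 1122 by 1+−1 (crossing ee-rise), at the free rise
(k₁,k₂), where k₁ < π k₁ < k₂ < π k₂; the new pair is (k₁, π k₂), with + at
π k₁ and − at k₂. -/
def Move5 {n : ℕ} (γ τ : Clan n) : Prop :=
  ∃ k₁ k₂ : Fin n, k₁ < γ.1.1 k₁ ∧ γ.1.1 k₁ < k₂ ∧ k₂ < γ.1.1 k₂ ∧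
    FreeRise γ.1.1 k₁ k₂ ∧
    τ.1.1 = γ.1.1 * Equiv.swap k₁ (γ.1.1 k₁) * Equiv.swap k₂ (γ.1.1 k₂) *
      Equiv.swap k₁ (γ.1.1 k₂) ∧
    τ.1.2 (γ.1.1 k₁) = true ∧ τ.1.2 k₂ = false ∧
    (∀ x, x ≠ γ.1.1 k₁ → x ≠ k₂ → τ.1.2 x = γ.1.2 x)


namespace SectCover

open Finset

variable {n : ℕ}

/-- number of pairs (i, π i) with i an opener (i < π i), i ≤ a and π i ≥ y. -/
def Rk (π : Equiv.Perm (Fin n)) (a y : ℕ) : ℕ :=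
  (Finset.univ.filter (fun i : Fin n => i < π i ∧ (i : ℕ) ≤ a ∧ y ≤ (π i : ℕ))).card

lemma Rk_row_split (π : Equiv.Perm (Fin n)) {a₁ a₂ : ℕ} (h : a₁ ≤ a₂) (y : ℕ) :
    Rk π a₂ y = Rk π a₁ y +
      (Finset.univ.filter (fun i : Fin n => i < π i ∧ a₁ < (i : ℕ) ∧ (i : ℕ) ≤ a₂ ∧
        y ≤ (π i : ℕ))).card := by
  classical
  unfold Rk
  rw [← Finset.card_union_of_disjoint]
  · congr 1
    ext i
    simp only [Finset.mem_union, Finset.mem_filter, Finset.mem_univ, true_and]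
    constructor
    · rintro ⟨h1, h2, h3⟩
      rcases le_or_gt (i : ℕ) a₁ with hc | hc
      · exact Or.inl ⟨h1, hc, h3⟩
      · exact Or.inr ⟨h1, hc, h2, h3⟩
    · rintro (⟨h1, h2, h3⟩ | ⟨h1, h2, h3, h4⟩)
      exacts [⟨h1, le_trans h2 h, h3⟩, ⟨h1, h3, h4⟩]
  · rw [Finset.disjoint_left]
    intro i hi hi'
    simp only [Finset.mem_filter] at hi hi'
    omega

lemma Rk_col_split (π : Equiv.Perm (Fin n)) (a : ℕ) {y₁ y₂ : ℕ} (h : y₁ ≤ y₂) :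
    Rk π a y₁ = Rk π a y₂ +
      (Finset.univ.filter (fun i : Fin n => i < π i ∧ (i : ℕ) ≤ a ∧ y₁ ≤ (π i : ℕ) ∧
        (π i : ℕ) < y₂)).card := by
  classical
  unfold Rk
  rw [← Finset.card_union_of_disjoint]
  · congr 1
    ext i
    simp only [Finset.mem_union, Finset.mem_filter, Finset.mem_univ, true_and]
    constructor
    · rintro ⟨h1, h2, h3⟩
      rcases le_or_gt y₂ (π i : ℕ) with hc | hc
      · exact Or.inl ⟨h1, h2, hc⟩
      · exact Or.inr ⟨h1, h2, h3, hc⟩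
    · rintro (⟨h1, h2, h3⟩ | ⟨h1, h2, h3, h4⟩)
      exacts [⟨h1, h2, le_trans h h3⟩, ⟨h1, h2, h3⟩]
  · rw [Finset.disjoint_left]
    intro i hi hi'
    simp only [Finset.mem_filter] at hi hi'
    omega

/-- the row interval count over a single row `(a, a+1]` containing position x. -/
lemma row_single (π : Equiv.Perm (Fin n)) {a : ℕ} (x : Fin n) (hx : (x : ℕ) = a + 1) (y : ℕ) :
    (Finset.univ.filter (fun i : Fin n => i < π i ∧ a < (i : ℕ) ∧ (i : ℕ) ≤ a + 1 ∧
        y ≤ (π i : ℕ))).card = (if x < π x ∧ y ≤ (π x : ℕ) then 1 else 0) := by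
  classical
  split_ifs with hc
  · rw [Finset.card_eq_one]
    refine ⟨x, ?_⟩
    ext i
    simp only [Finset.mem_filter, Finset.mem_univ, true_and, Finset.mem_singleton]
    constructor
    · rintro ⟨-, h2, h3, -⟩
      exact Fin.ext (by omega)
    · rintro rfl
      exact ⟨hc.1, by omega, by omega, hc.2⟩
  · rw [Finset.card_eq_zero]
    ext i
    simp only [Finset.mem_filter, Finset.mem_univ, true_and, Finset.notMem_empty, iff_false]
    rintro ⟨h1, h2, h3, h4⟩
    have : i = x := Fin.ext (by omega)
    subst this
    exact hc ⟨h1, h4⟩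

lemma Rk_row_succ (π : Equiv.Perm (Fin n)) {a : ℕ} (x : Fin n) (hx : (x : ℕ) = a + 1) (y : ℕ) :
    Rk π (a + 1) y = Rk π a y + (if x < π x ∧ y ≤ (π x : ℕ) then 1 else 0) := by
  rw [Rk_row_split π (Nat.le_succ a) y, row_single π x hx y]

lemma Rk_row_stable (π : Equiv.Perm (Fin n)) {a : ℕ} (hn : n ≤ a + 1) (y : ℕ) :
    Rk π (a + 1) y = Rk π a y := by
  rw [Rk_row_split π (Nat.le_succ a) y]
  have : (Finset.univ.filter (fun i : Fin n => i < π i ∧ a < (i : ℕ) ∧ (i : ℕ) ≤ a + 1 ∧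
      y ≤ (π i : ℕ))) = ∅ := by
    ext i
    simp only [Finset.mem_filter, Finset.mem_univ, true_and, Finset.notMem_empty, iff_false]
    have := i.isLt
    rintro ⟨-, h2, -, -⟩
    omega
  rw [this]
  simp

/-- the column interval count over a single column `[y, y+1)` containing position d,
for an involution. -/
lemma col_single (π : Equiv.Perm (Fin n)) (hπ : ∀ i, π (π i) = i)
    {y : ℕ} (d : Fin n) (hd : (d : ℕ) = y) (a : ℕ) :
    (Finset.univ.filter (fun i : Fin n => i < π i ∧ (i : ℕ) ≤ a ∧ y ≤ (π i : ℕ) ∧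
        (π i : ℕ) < y + 1)).card = (if π d < d ∧ (π d : ℕ) ≤ a then 1 else 0) := by
  classical
  split_ifs with hc
  · rw [Finset.card_eq_one]
    refine ⟨π d, ?_⟩
    ext i
    simp only [Finset.mem_filter, Finset.mem_univ, true_and, Finset.mem_singleton]
    constructor
    · rintro ⟨h1, h2, h3, h4⟩
      have : π i = d := Fin.ext (by omega)
      have := congrArg π this
      rwa [hπ i] at this
    · rintro rfl
      rw [hπ d]
      exact ⟨hc.1, hc.2, by omega, by omega⟩
  · rw [Finset.card_eq_zero]
    ext i
    simp only [Finset.mem_filter, Finset.mem_univ, true_and, Finset.notMem_empty, iff_false]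
    rintro ⟨h1, h2, h3, h4⟩
    have hpi : π i = d := Fin.ext (by omega)
    have hi : i = π d := by rw [← hpi, hπ i]
    apply hc
    rw [← hi]
    rw [hpi] at h1
    exact ⟨h1, h2⟩

lemma Rk_col_succ (π : Equiv.Perm (Fin n)) (hπ : ∀ i, π (π i) = i)
    {y : ℕ} (d : Fin n) (hd : (d : ℕ) = y) (a : ℕ) :
    Rk π a y = Rk π a (y + 1) + (if π d < d ∧ (π d : ℕ) ≤ a then 1 else 0) := by
  rw [Rk_col_split π a (Nat.le_succ y), col_single π hπ d hd a]

lemma Rk_col_big (π : Equiv.Perm (Fin n)) {y : ℕ} (hy : n ≤ y) (a : ℕ) :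
    Rk π a y = 0 := by
  rw [Rk, Finset.card_eq_zero]
  ext i
  simp only [Finset.mem_filter, Finset.mem_univ, true_and, Finset.notMem_empty, iff_false]
  rintro ⟨-, -, h3⟩
  have := (π i).isLt
  omega



lemma Rk_row_zero (π : Equiv.Perm (Fin n)) (x : Fin n) (hx : (x : ℕ) = 0) (y : ℕ) :
    Rk π 0 y = if x < π x ∧ y ≤ (π x : ℕ) then 1 else 0 := by
  classical
  unfold Rk
  split_ifs with hc
  · rw [Finset.card_eq_one]
    refine ⟨x, ?_⟩
    ext i
    simp only [Finset.mem_filter, Finset.mem_univ, true_and, Finset.mem_singleton]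
    constructor
    · rintro ⟨-, h2, -⟩
      exact Fin.ext (by omega)
    · rintro rfl
      exact ⟨hc.1, by omega, hc.2⟩
  · rw [Finset.card_eq_zero]
    ext i
    simp only [Finset.mem_filter, Finset.mem_univ, true_and, Finset.notMem_empty, iff_false]
    rintro ⟨h1, h2, h3⟩
    have : i = x := Fin.ext (by omega)
    subst this
    exact hc ⟨h1, h3⟩

lemma ite_one_zero_eq_iff {p q : Prop} [Decidable p] [Decidable q]
    (h : (if p then (1:ℕ) else 0) = if q then 1 else 0) : p ↔ q := by
  split_ifs at h with h1 h2 h2 <;> simp_all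

section B
variable (P Q : Equiv.Perm (Fin n))

lemma opener_iff (x : Fin n)
    (hEq : ∀ a y : ℕ, a ≤ (x : ℕ) → a < y → Rk P a y = Rk Q a y)
    (y : ℕ) (hy : (x : ℕ) < y) :
    (x < P x ∧ y ≤ (P x : ℕ)) ↔ (x < Q x ∧ y ≤ (Q x : ℕ)) := by
  classical
  rcases Nat.eq_zero_or_eq_succ_pred (x : ℕ) with h0 | hs
  · apply ite_one_zero_eq_iff
    rw [← Rk_row_zero P x h0 y, ← Rk_row_zero Q x h0 y]
    exact hEq 0 y (by omega) (h0 ▸ hy)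
  · set a := (x : ℕ) - 1 with ha
    have hx : (x : ℕ) = a + 1 := hs
    apply ite_one_zero_eq_iff
    have e1 : Rk P (a+1) y = Rk P a y + (if x < P x ∧ y ≤ (P x : ℕ) then 1 else 0) := by
      rw [Rk_row_split P (Nat.le_succ a) y, row_single P x hx y]
    have e2 : Rk Q (a+1) y = Rk Q a y + (if x < Q x ∧ y ≤ (Q x : ℕ) then 1 else 0) := by
      rw [Rk_row_split Q (Nat.le_succ a) y, row_single Q x hx y]
    have g1 := hEq (a+1) y (by omega) (by omega)
    have g2 := hEq a y (by omega) (by omega)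
    omega

lemma opener_eq (x : Fin n)
    (hEq : ∀ a y : ℕ, a ≤ (x : ℕ) → a < y → Rk P a y = Rk Q a y)
    (hx : x < P x) : x < Q x ∧ Q x = P x := by
  have h1 := (opener_iff P Q x hEq (P x : ℕ) hx).mp ⟨hx, le_refl _⟩
  obtain ⟨hq, hpq⟩ := h1
  have h2 := (opener_iff P Q x hEq (Q x : ℕ) hq).mpr ⟨hq, le_refl _⟩
  exact ⟨hq, le_antisymm (Fin.le_def.mpr h2.2) (Fin.le_def.mpr hpq)⟩

lemma eq_of_Rk_eq (hP2 : ∀ i, P (P i) = i) (hQ2 : ∀ i, Q (Q i) = i)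
    (hEq : ∀ a y : ℕ, a < y → Rk P a y = Rk Q a y) : P = Q := by
  have hEq' : ∀ a y : ℕ, a < y → Rk Q a y = Rk P a y := fun a y h => (hEq a y h).symm
  ext i
  rcases lt_trichotomy i (P i) with hlt | heq | hgt
  · exact congrArg Fin.val (opener_eq P Q i (fun a y _ h => hEq a y h) hlt).2.symm
  · -- P i = i ; show Q i = i
    rcases lt_trichotomy i (Q i) with h1 | h2 | h3
    · exact congrArg Fin.val (opener_eq Q P i (fun a y _ h => hEq' a y h) h1).2
    · rw [← h2, ← heq]
    · -- Q i < i : x := Q i is a Q-opener with partner i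
      exfalso
      set x := Q i with hxd
      have hqx : Q x = i := hQ2 i
      have hxo : x < Q x := by rw [hqx]; exact h3
      have := (opener_eq Q P x (fun a y _ h => hEq' a y h) hxo).2
      rw [hqx] at this
      -- P x = i, so P i = x ≠ i
      have hix : P i = x := by rw [← this, hP2]
      rw [← heq] at hix
      have h3' : (x : ℕ) < i := h3
      have := congrArg Fin.val hix
      omega
  · -- P i < i : i is a closer
    set x := P i with hxd
    have hpx : P x = i := hP2 i
    have hxo : x < P x := by rw [hpx]; exact hgt
    have h := (opener_eq P Q x (fun a y _ h => hEq a y h) hxo).2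
    rw [hpx] at h
    have : Q i = x := by rw [← h, hQ2]
    rw [this]

lemma exists_Rk_lt (hP2 : ∀ i, P (P i) = i) (hQ2 : ∀ i, Q (Q i) = i)
    (hle : ∀ a y : ℕ, a < y → Rk P a y ≤ Rk Q a y) (hne : P ≠ Q) :
    ∃ a y : ℕ, a < y ∧ Rk P a y < Rk Q a y := by
  by_contra hcon
  push_neg at hcon
  exact hne (eq_of_Rk_eq P Q hP2 hQ2
    (fun a y h => le_antisymm (hle a y h) (hcon a y h)))

end B


lemma Rk_row_mono (π : Equiv.Perm (Fin n)) {a₁ a₂ : ℕ} (h : a₁ ≤ a₂) (y : ℕ) :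
    Rk π a₁ y ≤ Rk π a₂ y := by
  rw [Rk_row_split π h y]
  exact Nat.le_add_right _ _

section Core
variable (P Q : Equiv.Perm (Fin n)) (b : Fin n → Bool)

def Valid (h d : Fin n) : Prop :=
  b h = false ∧ b d = true ∧ ((P h : ℕ) < (d : ℕ)) ∧ ((h : ℕ) < (P d : ℕ))

def RECT (h d : Fin n) (r y : ℕ) : Prop :=
  (h : ℕ) ≤ r ∧ r < (P d : ℕ) ∧ (P h : ℕ) < y ∧ y ≤ (d : ℕ)

instance instDecRECT (h d : Fin n) (r y : ℕ) : Decidable (RECT P h d r y) := by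
  unfold RECT
  infer_instance

def Good (h d : Fin n) : Prop :=
  ∀ r y : ℕ, r < y → RECT P h d r y → Rk P r y < Rk Q r y

def Free (h d : Fin n) : Prop :=
  ∀ z : Fin n, (h : ℕ) < (z : ℕ) → (z : ℕ) < (P d : ℕ) →
    ¬((P h : ℕ) < (P z : ℕ) ∧ (P z : ℕ) < (d : ℕ))

lemma C1 (hP2 : ∀ i, P (P i) = i) (hQ2 : ∀ i, Q (Q i) = i)
    (hPb : ∀ i : Fin n, (P i < i → b i = true) ∧ (i < P i → b i = false))
    (hQb : ∀ i : Fin n, (Q i < i → b i = true) ∧ (i < Q i → b i = false))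
    (hle : ∀ a y : ℕ, a < y → Rk P a y ≤ Rk Q a y) (hne : P ≠ Q) :
    ∃ a c : Fin n, Valid P b a c ∧ (a : ℕ) < (c : ℕ) ∧
      (∀ y : ℕ, (P a : ℕ) < y → y ≤ (c : ℕ) → Rk Q (a : ℕ) y = Rk P (a : ℕ) y + 1) ∧
      (∀ y : ℕ, (c : ℕ) < y → Rk P (a : ℕ) y = Rk Q (a : ℕ) y) := by
  classical
  obtain ⟨a₀, y₀', hay₀, hlt₀⟩ := exists_Rk_lt P Q hP2 hQ2 hle hne
  have hex : ∃ a : ℕ, ∃ y, a < y ∧ Rk P a y < Rk Q a y := ⟨a₀, y₀', hay₀, hlt₀⟩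
  obtain ⟨A, hspecA, hrowlt⟩ : ∃ A : ℕ, (∃ y, A < y ∧ Rk P A y < Rk Q A y) ∧
      (∀ m : ℕ, m < A → ∀ y, m < y → Rk P m y = Rk Q m y) := by
    refine ⟨Nat.find hex, Nat.find_spec hex, ?_⟩
    intro m hm y hy
    have hmin := Nat.find_min hex hm
    push_neg at hmin
    exact le_antisymm (hle m y hy) (hmin y hy)
  obtain ⟨y₀, hAy₀, hAlt⟩ := hspecA
  have hfin : ∃ afin : Fin n, (afin : ℕ) = A ∧ afin < Q afin ∧ y₀ ≤ (Q afin : ℕ) := by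
    rcases Nat.eq_zero_or_eq_succ_pred A with h0 | hs
    · rw [h0] at hAlt
      have hpos : 0 < Rk Q 0 y₀ := lt_of_le_of_lt (Nat.zero_le _) hAlt
      rw [Rk] at hpos
      obtain ⟨i, hi⟩ := Finset.card_pos.mp hpos
      simp only [Finset.mem_filter, Finset.mem_univ, true_and] at hi
      exact ⟨i, by omega, hi.1, hi.2.2⟩
    · set a' := A - 1 with ha'
      have hA' : A = a' + 1 := hs
      have h1 : Rk Q a' y₀ = Rk P a' y₀ := (hrowlt a' (by omega) y₀ (by omega)).symm
      have h2 : Rk P a' y₀ ≤ Rk P A y₀ := Rk_row_mono P (by omega) y₀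
      have h3 : Rk Q a' y₀ < Rk Q A y₀ := by omega
      rw [hA', Rk_row_split Q (by omega : a' ≤ a' + 1) y₀] at h3
      have hpos : 0 < (Finset.univ.filter (fun i : Fin n => i < Q i ∧ a' < (i : ℕ) ∧
          (i : ℕ) ≤ a' + 1 ∧ y₀ ≤ (Q i : ℕ))).card := by omega
      obtain ⟨i, hi⟩ := Finset.card_pos.mp hpos
      simp only [Finset.mem_filter, Finset.mem_univ, true_and] at hi
      exact ⟨i, by omega, hi.1, hi.2.2.2⟩
  obtain ⟨afin, hafA, hQop, hQc⟩ := hfin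
  have key : ∀ y : ℕ, A < y →
      Rk Q A y + (if afin < P afin ∧ y ≤ (P afin : ℕ) then 1 else 0)
        = Rk P A y + (if y ≤ (Q afin : ℕ) then 1 else 0) := by
    intro y hy
    have hQite : (if afin < Q afin ∧ y ≤ (Q afin : ℕ) then (1:ℕ) else 0)
        = (if y ≤ (Q afin : ℕ) then 1 else 0) := by
      rw [if_congr (and_iff_right hQop) rfl rfl]
    rcases Nat.eq_zero_or_eq_succ_pred A with h0 | hs
    · have eP := Rk_row_zero P afin (by omega) y
      have eQ := Rk_row_zero Q afin (by omega) y
      rw [h0, eP, eQ, hQite]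
      omega
    · set a' := A - 1 with ha'
      have hA' : A = a' + 1 := hs
      have eP : Rk P (a' + 1) y = Rk P a' y +
          (if afin < P afin ∧ y ≤ (P afin : ℕ) then 1 else 0) :=
        Rk_row_succ P afin (by omega) y
      have eQ : Rk Q (a' + 1) y = Rk Q a' y +
          (if afin < Q afin ∧ y ≤ (Q afin : ℕ) then 1 else 0) :=
        Rk_row_succ Q afin (by omega) y
      have hrow' : Rk P a' y = Rk Q a' y := hrowlt a' (by omega) y (by omega)
      rw [hA', eP, eQ, hQite]
      omega
  have hk₀ := key y₀ hAy₀
  rw [if_pos hQc] at hk₀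
  have hnotP : ¬(afin < P afin ∧ y₀ ≤ (P afin : ℕ)) := by
    intro hcon
    rw [if_pos hcon] at hk₀
    omega
  have hbfa : b afin = false := (hQb afin).2 hQop
  have hnc : ¬(P afin < afin) := by
    intro hcl
    rw [(hPb afin).1 hcl] at hbfa
    exact Bool.noConfusion hbfa
  have hvc : (P afin : ℕ) < (Q afin : ℕ) := by
    rcases lt_or_ge afin (P afin) with hop | hfx
    · have : ¬ y₀ ≤ (P afin : ℕ) := fun hcc => hnotP ⟨hop, hcc⟩
      omega
    · have h1 : (P afin : ℕ) ≤ (afin : ℕ) := hfx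
      have h2 : (afin : ℕ) < y₀ := by omega
      omega
  have hbct : b (Q afin) = true := by
    apply (hQb (Q afin)).1
    have : Q (Q afin) = afin := hQ2 afin
    rw [this]
    exact hQop
  have hcP : (afin : ℕ) < (P (Q afin) : ℕ) := by
    rcases lt_trichotomy (P (Q afin)) (Q afin) with hcl | hfx | hop
    · -- closer; x := P (Q afin)
      by_contra hle'
      push_neg at hle'
      set x := P (Q afin) with hxd
      have hPx : P x = Q afin := hP2 (Q afin)
      have hxval : (x : ℕ) ≤ A := by omega
      have hxo : x < P x := by
        rw [hPx]
        have : (x : ℕ) < (Q afin : ℕ) := hcl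
        exact Fin.lt_def.mpr (by omega)
      rcases eq_or_lt_of_le hxval with heq | hlt
      · have : x = afin := Fin.ext (by omega)
        rw [this] at hPx
        have := congrArg Fin.val hPx
        omega
      · have := (opener_eq P Q x
          (fun a y ha hy => hrowlt a (lt_of_le_of_lt ha hlt) y hy) hxo).2
        rw [hPx] at this
        -- Q x = Q afin hence x = afin
        have hxe : x = afin := by
          have := congrArg Q this
          rwa [hQ2, hQ2] at this
        rw [hxe] at hlt
        omega
    · rw [hfx]
      have : (afin : ℕ) < (Q afin : ℕ) := hQop
      omega
    · exfalso
      have := (hPb (Q afin)).2 hop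
      rw [this] at hbct
      exact Bool.noConfusion hbct
  refine ⟨afin, Q afin, ⟨hbfa, hbct, hvc, hcP⟩, ?_, ?_, ?_⟩
  · have : (afin : ℕ) < (Q afin : ℕ) := hQop
    omega
  · intro y hv hc
    have hk := key y (by omega)
    rw [if_pos hc, if_neg (by omega : ¬(afin < P afin ∧ y ≤ (P afin : ℕ)))] at hk
    rw [hafA]
    omega
  · intro y hc
    have hk := key y (by omega)
    rw [if_neg (by omega : ¬ y ≤ (Q afin : ℕ)),
      if_neg (by omega : ¬(afin < P afin ∧ y ≤ (P afin : ℕ)))] at hk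
    rw [hafA]
    omega


lemma C2step (hP2 : ∀ i, P (P i) = i)
    (hPb : ∀ i : Fin n, (P i < i → b i = true) ∧ (i < P i → b i = false))
    (hle : ∀ a y : ℕ, a < y → Rk P a y ≤ Rk Q a y)
    (a c : Fin n) (hac : (a : ℕ) < (c : ℕ))
    (F1 : ∀ y : ℕ, (P a : ℕ) < y → y ≤ (c : ℕ) → Rk Q (a : ℕ) y = Rk P (a : ℕ) y + 1)
    (F2 : ∀ y : ℕ, (c : ℕ) < y → Rk P (a : ℕ) y = Rk Q (a : ℕ) y)
    (d : Fin n) (hVd : Valid P b a d) (hdc : (d : ℕ) ≤ (c : ℕ))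
    (hnG : ¬ Good P Q a d) :
    ∃ d' : Fin n, Valid P b a d' ∧ (d' : ℕ) ≤ (c : ℕ) ∧ (P d' : ℕ) < (P d : ℕ) := by
  classical
  obtain ⟨hba, hbd, hPad, haPd⟩ := hVd
  have hPdd : (P d : ℕ) ≤ (d : ℕ) := by
    rcases Fin.lt_or_ge d (P d) with hh | hh
    · rw [(hPb d).2 hh] at hbd; exact Bool.noConfusion hbd
    · exact hh
  unfold Good at hnG
  push_neg at hnG
  obtain ⟨r, y, hry, hREC, hge⟩ := hnG
  obtain ⟨h1, h2, h3, h4⟩ := hREC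
  have heq : Rk P r y = Rk Q r y := le_antisymm (hle r y hry) hge
  have hyc : y ≤ (c : ℕ) := le_trans h4 hdc
  have hrc : r < (c : ℕ) + 1 := by omega
  set AP := Finset.univ.filter (fun i : Fin n => i < P i ∧ (a : ℕ) < (i : ℕ) ∧
      (i : ℕ) ≤ r ∧ y ≤ (P i : ℕ)) with hAPd
  set AQ := Finset.univ.filter (fun i : Fin n => i < Q i ∧ (a : ℕ) < (i : ℕ) ∧
      (i : ℕ) ≤ r ∧ y ≤ (Q i : ℕ)) with hAQd
  set BP := Finset.univ.filter (fun i : Fin n => i < P i ∧ (a : ℕ) < (i : ℕ) ∧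
      (i : ℕ) ≤ r ∧ (c : ℕ) + 1 ≤ (P i : ℕ)) with hBPd
  set BQ := Finset.univ.filter (fun i : Fin n => i < Q i ∧ (a : ℕ) < (i : ℕ) ∧
      (i : ℕ) ≤ r ∧ (c : ℕ) + 1 ≤ (Q i : ℕ)) with hBQd
  have sPy : Rk P r y = Rk P (a : ℕ) y + AP.card := Rk_row_split P h1 y
  have sQy : Rk Q r y = Rk Q (a : ℕ) y + AQ.card := Rk_row_split Q h1 y
  have sPc : Rk P r ((c : ℕ) + 1) = Rk P (a : ℕ) ((c : ℕ) + 1) + BP.card :=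
    Rk_row_split P h1 _
  have sQc : Rk Q r ((c : ℕ) + 1) = Rk Q (a : ℕ) ((c : ℕ) + 1) + BQ.card :=
    Rk_row_split Q h1 _
  have hF1y := F1 y h3 hyc
  have hF2c := F2 ((c : ℕ) + 1) (by omega)
  have hlec := hle r ((c : ℕ) + 1) hrc
  have hBQle : BP.card ≤ BQ.card := by omega
  have hAPQ : AP.card = AQ.card + 1 := by omega
  -- split AP by partner ≤ c
  have hsplitP : (AP.filter (fun i => (P i : ℕ) ≤ (c : ℕ))).card + BP.card = AP.card := by
    rw [show BP = AP.filter (fun i => ¬ (P i : ℕ) ≤ (c : ℕ)) by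
      ext i
      simp only [hBPd, hAPd, Finset.mem_filter, Finset.mem_univ, true_and]
      constructor
      · rintro ⟨g1, g2, g3, g4⟩
        exact ⟨⟨g1, g2, g3, by omega⟩, by omega⟩
      · rintro ⟨⟨g1, g2, g3, g4⟩, g5⟩
        exact ⟨g1, g2, g3, by omega⟩]
    exact Finset.card_filter_add_card_filter_not _
  have hBQsub : BQ.card ≤ AQ.card := by
    apply Finset.card_le_card
    intro i hi
    simp only [hBQd, hAQd, Finset.mem_filter, Finset.mem_univ, true_and] at hi ⊢
    obtain ⟨g1, g2, g3, g4⟩ := hi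
    exact ⟨g1, g2, g3, by omega⟩
  have hpos : 0 < (AP.filter (fun i => (P i : ℕ) ≤ (c : ℕ))).card := by omega
  obtain ⟨x, hx⟩ := Finset.card_pos.mp hpos
  simp only [hAPd, Finset.mem_filter, Finset.mem_univ, true_and] at hx
  obtain ⟨⟨hxo, hax, hxr, hyx⟩, hxc⟩ := hx
  refine ⟨P x, ⟨hba, ?_, by omega, ?_⟩, hxc, ?_⟩
  · apply (hPb (P x)).1
    rw [hP2 x]
    exact hxo
  · rw [hP2 x]; omega
  · rw [hP2 x]; omega

lemma C2 (hP2 : ∀ i, P (P i) = i)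
    (hPb : ∀ i : Fin n, (P i < i → b i = true) ∧ (i < P i → b i = false))
    (hle : ∀ a y : ℕ, a < y → Rk P a y ≤ Rk Q a y)
    (a c : Fin n) (hV : Valid P b a c) (hac : (a : ℕ) < (c : ℕ))
    (F1 : ∀ y : ℕ, (P a : ℕ) < y → y ≤ (c : ℕ) → Rk Q (a : ℕ) y = Rk P (a : ℕ) y + 1)
    (F2 : ∀ y : ℕ, (c : ℕ) < y → Rk P (a : ℕ) y = Rk Q (a : ℕ) y) :
    ∃ h d : Fin n, Valid P b h d ∧ Good P Q h d := by
  classical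
  have H : ∀ m : ℕ, ∀ d : Fin n, (P d : ℕ) ≤ m → Valid P b a d → (d : ℕ) ≤ (c : ℕ) →
      ∃ h d' : Fin n, Valid P b h d' ∧ Good P Q h d' := by
    intro m
    induction m with
    | zero =>
      intro d hm hVd hdc
      by_cases hG : Good P Q a d
      · exact ⟨a, d, hVd, hG⟩
      · obtain ⟨d', _, _, hlt⟩ := C2step P Q b hP2 hPb hle a c hac F1 F2 d hVd hdc hG
        omega
    | succ m IH =>
      intro d hm hVd hdc
      by_cases hG : Good P Q a d
      · exact ⟨a, d, hVd, hG⟩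
      · obtain ⟨d', hVd', hdc', hlt⟩ := C2step P Q b hP2 hPb hle a c hac F1 F2 d hVd hdc hG
        exact IH d' (by omega) hVd' hdc'
  exact H (P c : ℕ) c le_rfl hV le_rfl



lemma C3 (hP2 : ∀ i, P (P i) = i)
    (hPb : ∀ i : Fin n, (P i < i → b i = true) ∧ (i < P i → b i = false))
    (hGV : ∃ h d : Fin n, Valid P b h d ∧ Good P Q h d) :
    ∃ h d : Fin n, Valid P b h d ∧ Good P Q h d ∧ Free P h d := by
  classical
  obtain ⟨h₀, d₀, hV₀, hG₀⟩ := hGV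
  set S := Finset.univ.filter
      (fun p : Fin n × Fin n => Valid P b p.1 p.2 ∧ Good P Q p.1 p.2) with hSd
  have hS0 : (h₀, d₀) ∈ S := by
    rw [hSd, Finset.mem_filter]
    exact ⟨Finset.mem_univ _, hV₀, hG₀⟩
  obtain ⟨p, hpS, hpmin⟩ :=
    Finset.exists_min_image S (fun p => (p.2 : ℕ) - (p.1 : ℕ)) ⟨_, hS0⟩
  obtain ⟨h, d⟩ := p
  rw [hSd, Finset.mem_filter] at hpS
  obtain ⟨-, hV, hG⟩ := hpS
  dsimp only at hV hG
  refine ⟨h, d, hV, hG, ?_⟩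
  intro z hz1 hz2 hbb
  obtain ⟨hb1, hb2⟩ := hbb
  obtain ⟨hbh, hbd, hPhd, hhPd⟩ := hV
  have hPh : (h : ℕ) ≤ (P h : ℕ) := by
    rcases lt_or_ge (P h) h with hh | hh
    · rw [(hPb h).1 hh] at hbh; exact Bool.noConfusion hbh
    · exact hh
  have hPd : (P d : ℕ) ≤ (d : ℕ) := by
    rcases lt_or_ge d (P d) with hh | hh
    · rw [(hPb d).2 hh] at hbd; exact Bool.noConfusion hbd
    · exact hh
  have mem_min : ∀ h' d' : Fin n, Valid P b h' d' → Good P Q h' d' →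
      (d : ℕ) - (h : ℕ) ≤ (d' : ℕ) - (h' : ℕ) := by
    intro h' d' hV' hG'
    have hmem : ((h', d') : Fin n × Fin n) ∈ S := by
      rw [hSd, Finset.mem_filter]
      exact ⟨Finset.mem_univ _, hV', hG'⟩
    simpa using hpmin (h', d') hmem
  rcases lt_trichotomy z (P z) with hzo | hzf | hzc
  · -- z is an opener : candidate (h, P z)
    have hzo' : (z : ℕ) < (P z : ℕ) := hzo
    have hPPz : (P (P z) : ℕ) = (z : ℕ) := by rw [hP2]
    have hVn : Valid P b h (P z) := by
      refine ⟨hbh, ?_, by omega, by omega⟩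
      apply (hPb (P z)).1
      have : (P (P z) : ℕ) < (P z : ℕ) := by omega
      exact this
    have hGn : Good P Q h (P z) := by
      intro r y hry hR
      obtain ⟨g1, g2, g3, g4⟩ := hR
      rw [hPPz] at g2
      exact hG r y hry ⟨g1, by omega, g3, by omega⟩
    have := mem_min h (P z) hVn hGn
    omega
  · -- z is fixed
    have hPzz : (P z : ℕ) = (z : ℕ) := (congrArg Fin.val hzf).symm
    rcases hc : b z with hbz | hbz
    · -- fixed minus : candidate (z, d)
      have hVn : Valid P b z d := ⟨hc, hbd, by omega, by omega⟩
      have hGn : Good P Q z d := by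
        intro r y hry hR
        obtain ⟨g1, g2, g3, g4⟩ := hR
        exact hG r y hry ⟨by omega, g2, by omega, g4⟩
      have := mem_min z d hVn hGn
      omega
    · -- fixed plus : candidate (h, z)
      have hVn : Valid P b h z := ⟨hbh, hc, by omega, by omega⟩
      have hGn : Good P Q h z := by
        intro r y hry hR
        obtain ⟨g1, g2, g3, g4⟩ := hR
        rw [hPzz] at g2
        exact hG r y hry ⟨g1, by omega, g3, by omega⟩
      have := mem_min h z hVn hGn
      omega
  · -- z is a closer : candidate (P z, d)
    have hzc' : (P z : ℕ) < (z : ℕ) := hzc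
    have hPPz : (P (P z) : ℕ) = (z : ℕ) := by rw [hP2]
    have hVn : Valid P b (P z) d := by
      refine ⟨?_, hbd, by omega, by omega⟩
      apply (hPb (P z)).2
      have : (P z : ℕ) < (P (P z) : ℕ) := by omega
      exact this
    have hGn : Good P Q (P z) d := by
      intro r y hry hR
      obtain ⟨g1, g2, g3, g4⟩ := hR
      rw [hPPz] at g3
      exact hG r y hry ⟨by omega, g2, by omega, g4⟩
    have := mem_min (P z) d hVn hGn
    omega


end Core

section Clans
variable {b : Fin n → Bool}

lemma clan_inv (γ : Clan n) : ∀ i, γ.1.1 (γ.1.1 i) = i := by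
  intro i
  have h := congrArg (fun e : Equiv.Perm (Fin n) => e i) γ.2.1
  simpa [Equiv.Perm.mul_apply] using h

lemma clan_compat (γ : Clan n) (hbγ : baseClan γ = b) :
    ∀ i, (γ.1.1 i < i → b i = true) ∧ (i < γ.1.1 i → b i = false) := by
  intro i
  constructor
  · intro hcl
    rw [← hbγ]
    simp only [baseClan]
    rw [if_neg (not_lt.mpr (le_of_lt hcl)), if_pos hcl]
  · intro hop
    rw [← hbγ]
    simp only [baseClan]
    rw [if_pos hop]

lemma clan_sign (γ : Clan n) (hbγ : baseClan γ = b) :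
    ∀ i, γ.1.2 i = if γ.1.1 i = i then b i else false := by
  intro i
  by_cases hfx : γ.1.1 i = i
  · rw [if_pos hfx, ← hbγ]
    simp only [baseClan]
    rw [if_neg (by rw [hfx]; exact lt_irrefl i), if_neg (by rw [hfx]; exact lt_irrefl i)]
  · rw [if_neg hfx, γ.2.2 i hfx]

lemma perm_involutive (π : Equiv.Perm (Fin n)) (hp : ∀ i, π (π i) = i) : π * π = 1 := by
  ext i
  simp [Equiv.Perm.mul_apply, hp i]

lemma baseClan_mk (σ : Clan n)
    (hop : ∀ i, i < σ.1.1 i → b i = false) (hcl : ∀ i, σ.1.1 i < i → b i = true)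
    (hsg : ∀ i, σ.1.1 i = i → σ.1.2 i = b i) : baseClan σ = b := by
  funext i
  simp only [baseClan]
  rcases lt_trichotomy i (σ.1.1 i) with hh | hh | hh
  · rw [if_pos hh]
    exact (hop i hh).symm
  · rw [if_neg (fun hcon => by rw [← hh] at hcon; exact lt_irrefl _ hcon),
      if_neg (fun hcon => by rw [← hh] at hcon; exact lt_irrefl _ hcon)]
    exact hsg i hh.symm
  · rw [if_neg (asymm hh), if_pos hh]
    exact (hcl i hh).symm

/-- integer indicator for the Rk counting set -/
def ind (π : Equiv.Perm (Fin n)) (r y : ℕ) (i : Fin n) : ℤ :=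
  if i < π i ∧ (i : ℕ) ≤ r ∧ y ≤ (π i : ℕ) then 1 else 0

lemma Rk_int (π : Equiv.Perm (Fin n)) (r y : ℕ) :
    (Rk π r y : ℤ) = ∑ i : Fin n, ind π r y i := by
  classical
  rw [Rk, Finset.card_filter]
  push_cast
  simp [ind]

lemma diff_eval (π₁ π₂ : Equiv.Perm (Fin n)) (s : Finset (Fin n))
    (hs : ∀ i, i ∉ s → π₁ i = π₂ i) (r y : ℕ) :
    (Rk π₁ r y : ℤ) - Rk π₂ r y = ∑ i ∈ s, (ind π₁ r y i - ind π₂ r y i) := by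
  classical
  rw [Rk_int, Rk_int, ← Finset.sum_sub_distrib]
  refine (Finset.sum_subset (Finset.subset_univ s) ?_).symm
  intro x _ hx
  simp [ind, hs x hx]

lemma mk_move1 (γ : Clan n) (hbγ : baseClan γ = b) (h d : Fin n)
    (hbh : b h = false) (hbd : b d = true)
    (hfh : γ.1.1 h = h) (hfd : γ.1.1 d = d) (hhd : (h : ℕ) < (d : ℕ))
    (hFree : Free γ.1.1 h d) :
    ∃ σ : Clan n, baseClan σ = b ∧ Move1 γ σ ∧
      ∀ r y : ℕ, r < y → Rk σ.1.1 r y = Rk γ.1.1 r y +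
        (if RECT γ.1.1 h d r y then 1 else 0) := by
  classical
  have hP2 : ∀ i, γ.1.1 (γ.1.1 i) = i := clan_inv γ
  have hneq : h ≠ d := fun e => Nat.ne_of_lt hhd (congrArg Fin.val e)
  set σπ : Equiv.Perm (Fin n) := γ.1.1 * Equiv.swap h d with hσπ
  have vh : σπ h = d := by
    rw [hσπ, Equiv.Perm.mul_apply, Equiv.swap_apply_left, hfd]
  have vd : σπ d = h := by
    rw [hσπ, Equiv.Perm.mul_apply, Equiv.swap_apply_right, hfh]
  have vx : ∀ x, x ≠ h → x ≠ d → σπ x = γ.1.1 x := by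
    intro x hx1 hx2
    rw [hσπ, Equiv.Perm.mul_apply, Equiv.swap_apply_of_ne_of_ne hx1 hx2]
  have hσ2 : ∀ i, σπ (σπ i) = i := by
    intro i
    by_cases e1 : i = h
    · rw [e1, vh, vd]
    by_cases e2 : i = d
    · rw [e2, vd, vh]
    rw [vx i e1 e2]
    have g1 : γ.1.1 i ≠ h := fun e => e1 (by rw [← hP2 i, e, hfh])
    have g2 : γ.1.1 i ≠ d := fun e => e2 (by rw [← hP2 i, e, hfd])
    rw [vx _ g1 g2, hP2]
  refine ⟨⟨(σπ, fun i => if σπ i = i then b i else false),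
    perm_involutive σπ hσ2, fun i hi => if_neg hi⟩, ?_, ?_, ?_⟩
  · apply baseClan_mk
    · intro i hop
      dsimp only at hop ⊢
      by_cases e1 : i = h
      · rw [e1]; exact hbh
      by_cases e2 : i = d
      · exfalso
        rw [e2, vd] at hop
        have := Fin.lt_def.mp hop
        omega
      · rw [vx i e1 e2] at hop
        exact (clan_compat γ hbγ i).2 hop
    · intro i hcl
      dsimp only at hcl ⊢
      by_cases e1 : i = h
      · exfalso
        rw [e1, vh] at hcl
        have := Fin.lt_def.mp hcl
        omega
      by_cases e2 : i = d
      · rw [e2]; exact hbd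
      · rw [vx i e1 e2] at hcl
        exact (clan_compat γ hbγ i).1 hcl
    · intro i hfx
      dsimp only at hfx ⊢
      exact if_pos hfx
  · refine ⟨h, d, Fin.lt_def.mpr hhd, hfh, hfd, ?_, ?_, ?_, rfl, ?_⟩
    · rw [clan_sign γ hbγ h, if_pos hfh]; exact hbh
    · rw [clan_sign γ hbγ d, if_pos hfd]; exact hbd
    · refine ⟨Fin.lt_def.mpr hhd, by rw [hfh, hfd]; exact Fin.lt_def.mpr hhd, ?_⟩
      intro k hk1 hk2 hcon
      refine hFree k (Fin.lt_def.mp hk1) ?_ ⟨Fin.lt_def.mp hcon.1, ?_⟩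
      · have h2 := Fin.lt_def.mp hk2
        have : (γ.1.1 d : ℕ) = (d : ℕ) := congrArg Fin.val hfd
        omega
      · have h2 := Fin.lt_def.mp hcon.2
        have : (γ.1.1 d : ℕ) = (d : ℕ) := congrArg Fin.val hfd
        omega
    · intro x hx1 hx2
      show (if σπ x = x then b x else false) = γ.1.2 x
      rw [vx x hx1 hx2, clan_sign γ hbγ x]
  · intro r y hry
    change Rk σπ r y = _
    have hdiffZ : (Rk σπ r y : ℤ) - Rk γ.1.1 r y =
        ∑ i ∈ ({h, d} : Finset (Fin n)), (ind σπ r y i - ind γ.1.1 r y i) := by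
      refine diff_eval σπ γ.1.1 {h, d} ?_ r y
      intro i hi
      simp only [Finset.mem_insert, Finset.mem_singleton, not_or] at hi
      exact vx i hi.1 hi.2
    rw [Finset.sum_insert (by simp [hneq]), Finset.sum_singleton] at hdiffZ
    simp only [ind] at hdiffZ
    rw [vh, vd, hfh, hfd] at hdiffZ
    simp only [Fin.lt_def] at hdiffZ
    have hfh' : (γ.1.1 h : ℕ) = (h : ℕ) := congrArg Fin.val hfh
    have hfd' : (γ.1.1 d : ℕ) = (d : ℕ) := congrArg Fin.val hfd
    by_cases hREC : RECT γ.1.1 h d r y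
    · rw [if_pos hREC]
      obtain ⟨g1, g2, g3, g4⟩ := hREC
      split_ifs at hdiffZ <;> omega
    · rw [if_neg hREC]
      rw [RECT] at hREC
      split_ifs at hdiffZ <;> omega

lemma mk_move2 (γ : Clan n) (hbγ : baseClan γ = b) (h d : Fin n)
    (hbh : b h = false) (hbd : b d = true)
    (hfh : γ.1.1 h = h) (hcld : (γ.1.1 d : ℕ) < (d : ℕ))
    (hhPd : (h : ℕ) < (γ.1.1 d : ℕ)) (hFree : Free γ.1.1 h d) :
    ∃ σ : Clan n, baseClan σ = b ∧ Move2 γ σ ∧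
      ∀ r y : ℕ, r < y → Rk σ.1.1 r y = Rk γ.1.1 r y +
        (if RECT γ.1.1 h d r y then 1 else 0) := by
  classical
  have hP2 : ∀ i, γ.1.1 (γ.1.1 i) = i := clan_inv γ
  have hfh' : (γ.1.1 h : ℕ) = (h : ℕ) := congrArg Fin.val hfh
  have hPK : γ.1.1 (γ.1.1 d) = d := hP2 d
  have hPK' : (γ.1.1 (γ.1.1 d) : ℕ) = (d : ℕ) := congrArg Fin.val hPK
  have ne_hK : h ≠ γ.1.1 d := Fin.ne_of_val_ne (by omega)
  have ne_hd : h ≠ d := Fin.ne_of_val_ne (by omega)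
  have ne_Kd : γ.1.1 d ≠ d := Fin.ne_of_val_ne (by omega)
  have ne_dh : d ≠ h := ne_hd.symm
  have ne_dK : d ≠ γ.1.1 d := ne_Kd.symm
  set σπ : Equiv.Perm (Fin n) :=
    Equiv.swap h (γ.1.1 d) * γ.1.1 * Equiv.swap h (γ.1.1 d) with hσπ
  have vh : σπ h = d := by
    rw [hσπ]
    simp only [Equiv.Perm.mul_apply]
    rw [Equiv.swap_apply_left, hPK, Equiv.swap_apply_of_ne_of_ne ne_dh ne_dK]
  have vK : σπ (γ.1.1 d) = γ.1.1 d := by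
    rw [hσπ]
    simp only [Equiv.Perm.mul_apply]
    rw [Equiv.swap_apply_right, hfh, Equiv.swap_apply_left]
  have vd : σπ d = h := by
    rw [hσπ]
    simp only [Equiv.Perm.mul_apply]
    rw [Equiv.swap_apply_of_ne_of_ne ne_dh ne_dK, Equiv.swap_apply_right]
  have vx : ∀ x, x ≠ h → x ≠ γ.1.1 d → x ≠ d → σπ x = γ.1.1 x := by
    intro x hx1 hx2 hx3
    rw [hσπ]
    simp only [Equiv.Perm.mul_apply]
    rw [Equiv.swap_apply_of_ne_of_ne hx1 hx2,
      Equiv.swap_apply_of_ne_of_ne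
        (fun e => hx1 (by rw [← hP2 x, e, hfh]))
        (fun e => hx3 (by rw [← hP2 x, e, hPK]))]
  have hσ2 : ∀ i, σπ (σπ i) = i := by
    intro i
    by_cases e1 : i = h
    · rw [e1, vh, vd]
    by_cases e2 : i = γ.1.1 d
    · rw [e2, vK, vK]
    by_cases e3 : i = d
    · rw [e3, vd, vh]
    rw [vx i e1 e2 e3]
    have g1 : γ.1.1 i ≠ h := fun e => e1 (by rw [← hP2 i, e, hfh])
    have g2 : γ.1.1 i ≠ γ.1.1 d := fun e => e3 (by rw [← hP2 i, e, hPK])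
    have g3 : γ.1.1 i ≠ d := fun e => e2 (by rw [← hP2 i, e])
    rw [vx _ g1 g2 g3, hP2]
  have hbK : b (γ.1.1 d) = false := by
    refine (clan_compat γ hbγ (γ.1.1 d)).2 ?_
    rw [hPK]
    exact Fin.lt_def.mpr (by omega)
  refine ⟨⟨(σπ, fun i => if σπ i = i then b i else false),
    perm_involutive σπ hσ2, fun i hi => if_neg hi⟩, ?_, ?_, ?_⟩
  · apply baseClan_mk
    · intro i hop
      dsimp only at hop ⊢
      by_cases e1 : i = h
      · rw [e1]; exact hbh
      by_cases e2 : i = γ.1.1 d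
      · exfalso; rw [e2, vK] at hop; exact lt_irrefl _ hop
      by_cases e3 : i = d
      · exfalso
        rw [e3, vd] at hop
        have := Fin.lt_def.mp hop
        omega
      · rw [vx i e1 e2 e3] at hop
        exact (clan_compat γ hbγ i).2 hop
    · intro i hcl
      dsimp only at hcl ⊢
      by_cases e1 : i = h
      · exfalso
        rw [e1, vh] at hcl
        have := Fin.lt_def.mp hcl
        omega
      by_cases e2 : i = γ.1.1 d
      · exfalso; rw [e2, vK] at hcl; exact lt_irrefl _ hcl
      by_cases e3 : i = d
      · rw [e3]; exact hbd
      · rw [vx i e1 e2 e3] at hcl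
        exact (clan_compat γ hbγ i).1 hcl
    · intro i hfx
      dsimp only at hfx ⊢
      exact if_pos hfx
  · refine ⟨h, γ.1.1 d, Fin.lt_def.mpr hhPd, hfh, ?_, ?_, ?_, rfl, ?_, ?_⟩
    · rw [clan_sign γ hbγ h, if_pos hfh]; exact hbh
    · rw [hPK]; exact Fin.lt_def.mpr (by omega)
    · refine ⟨Fin.lt_def.mpr hhPd, ?_, ?_⟩
      · rw [hfh, hPK]
        exact Fin.lt_def.mpr (by omega)
      · intro k hk1 hk2 hcon
        refine hFree k (Fin.lt_def.mp hk1) (Fin.lt_def.mp hk2) ⟨?_, ?_⟩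
        · have := Fin.lt_def.mp hcon.1
          omega
        · have h2 := Fin.lt_def.mp hcon.2
          omega
    · show (if σπ (γ.1.1 d) = γ.1.1 d then b (γ.1.1 d) else false) = false
      rw [if_pos vK]
      exact hbK
    · intro x hx1 hx2
      show (if σπ x = x then b x else false) = γ.1.2 x
      by_cases e3 : x = d
      · rw [e3, if_neg (by rw [vd]; exact ne_hd), clan_sign γ hbγ d, if_neg ne_Kd]
      · rw [vx x hx1 hx2 e3, clan_sign γ hbγ x]
  · intro r y hry
    change Rk σπ r y = _
    have hdiffZ : (Rk σπ r y : ℤ) - Rk γ.1.1 r y =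
        ∑ i ∈ ({h, γ.1.1 d, d} : Finset (Fin n)),
          (ind σπ r y i - ind γ.1.1 r y i) := by
      refine diff_eval σπ γ.1.1 _ ?_ r y
      intro i hi
      simp only [Finset.mem_insert, Finset.mem_singleton, not_or] at hi
      exact vx i hi.1 hi.2.1 hi.2.2
    rw [Finset.sum_insert (by simp [ne_hK, ne_hd]),
      Finset.sum_insert (by simp [ne_Kd]), Finset.sum_singleton] at hdiffZ
    simp only [ind] at hdiffZ
    rw [vh, vK, vd, hfh, hPK] at hdiffZ
    simp only [Fin.lt_def] at hdiffZ
    by_cases hREC : RECT γ.1.1 h d r y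
    · rw [if_pos hREC]
      obtain ⟨g1, g2, g3, g4⟩ := hREC
      split_ifs at hdiffZ <;> omega
    · rw [if_neg hREC]
      rw [RECT] at hREC
      split_ifs at hdiffZ <;> omega

lemma mk_move3 (γ : Clan n) (hbγ : baseClan γ = b) (h d : Fin n)
    (hbh : b h = false) (hbd : b d = true)
    (hoph : (h : ℕ) < (γ.1.1 h : ℕ)) (hfd : γ.1.1 d = d)
    (hPhd : (γ.1.1 h : ℕ) < (d : ℕ)) (hFree : Free γ.1.1 h d) :
    ∃ σ : Clan n, baseClan σ = b ∧ Move3 γ σ ∧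
      ∀ r y : ℕ, r < y → Rk σ.1.1 r y = Rk γ.1.1 r y +
        (if RECT γ.1.1 h d r y then 1 else 0) := by
  classical
  have hP2 : ∀ i, γ.1.1 (γ.1.1 i) = i := clan_inv γ
  have hfd' : (γ.1.1 d : ℕ) = (d : ℕ) := congrArg Fin.val hfd
  have hPJ : γ.1.1 (γ.1.1 h) = h := hP2 h
  have hPJ' : (γ.1.1 (γ.1.1 h) : ℕ) = (h : ℕ) := congrArg Fin.val hPJ
  have ne_hJ : h ≠ γ.1.1 h := Fin.ne_of_val_ne (by omega)
  have ne_hd : h ≠ d := Fin.ne_of_val_ne (by omega)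
  have ne_Jd : γ.1.1 h ≠ d := Fin.ne_of_val_ne (by omega)
  have ne_dJ : d ≠ γ.1.1 h := ne_Jd.symm
  have ne_dh : d ≠ h := ne_hd.symm
  set σπ : Equiv.Perm (Fin n) :=
    Equiv.swap (γ.1.1 h) d * γ.1.1 * Equiv.swap (γ.1.1 h) d with hσπ
  have vh : σπ h = d := by
    rw [hσπ]
    simp only [Equiv.Perm.mul_apply]
    rw [Equiv.swap_apply_of_ne_of_ne ne_hJ ne_hd, Equiv.swap_apply_left]
  have vJ : σπ (γ.1.1 h) = γ.1.1 h := by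
    rw [hσπ]
    simp only [Equiv.Perm.mul_apply]
    rw [Equiv.swap_apply_left, hfd, Equiv.swap_apply_right]
  have vd : σπ d = h := by
    rw [hσπ]
    simp only [Equiv.Perm.mul_apply]
    rw [Equiv.swap_apply_right, hPJ, Equiv.swap_apply_of_ne_of_ne ne_hJ ne_hd]
  have vx : ∀ x, x ≠ h → x ≠ γ.1.1 h → x ≠ d → σπ x = γ.1.1 x := by
    intro x hx1 hx2 hx3
    rw [hσπ]
    simp only [Equiv.Perm.mul_apply]
    rw [Equiv.swap_apply_of_ne_of_ne hx2 hx3,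
      Equiv.swap_apply_of_ne_of_ne
        (fun e => hx1 (by rw [← hP2 x, e, hPJ]))
        (fun e => hx3 (by rw [← hP2 x, e, hfd]))]
  have hσ2 : ∀ i, σπ (σπ i) = i := by
    intro i
    by_cases e1 : i = h
    · rw [e1, vh, vd]
    by_cases e2 : i = γ.1.1 h
    · rw [e2, vJ, vJ]
    by_cases e3 : i = d
    · rw [e3, vd, vh]
    rw [vx i e1 e2 e3]
    have g1 : γ.1.1 i ≠ h := fun e => e2 (by rw [← hP2 i, e])
    have g2 : γ.1.1 i ≠ γ.1.1 h := fun e => e1 (by rw [← hP2 i, e, hPJ])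
    have g3 : γ.1.1 i ≠ d := fun e => e3 (by rw [← hP2 i, e, hfd])
    rw [vx _ g1 g2 g3, hP2]
  have hbJ : b (γ.1.1 h) = true := by
    refine (clan_compat γ hbγ (γ.1.1 h)).1 ?_
    rw [hPJ]
    exact Fin.lt_def.mpr (by omega)
  refine ⟨⟨(σπ, fun i => if σπ i = i then b i else false),
    perm_involutive σπ hσ2, fun i hi => if_neg hi⟩, ?_, ?_, ?_⟩
  · apply baseClan_mk
    · intro i hop
      dsimp only at hop ⊢
      by_cases e1 : i = h
      · rw [e1]; exact hbh
      by_cases e2 : i = γ.1.1 h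
      · exfalso; rw [e2, vJ] at hop; exact lt_irrefl _ hop
      by_cases e3 : i = d
      · exfalso
        rw [e3, vd] at hop
        have := Fin.lt_def.mp hop
        omega
      · rw [vx i e1 e2 e3] at hop
        exact (clan_compat γ hbγ i).2 hop
    · intro i hcl
      dsimp only at hcl ⊢
      by_cases e1 : i = h
      · exfalso
        rw [e1, vh] at hcl
        have := Fin.lt_def.mp hcl
        omega
      by_cases e2 : i = γ.1.1 h
      · exfalso; rw [e2, vJ] at hcl; exact lt_irrefl _ hcl
      by_cases e3 : i = d
      · rw [e3]; exact hbd
      · rw [vx i e1 e2 e3] at hcl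
        exact (clan_compat γ hbγ i).1 hcl
    · intro i hfx
      dsimp only at hfx ⊢
      exact if_pos hfx
  · refine ⟨h, d, Fin.lt_def.mpr hoph, Fin.lt_def.mpr hPhd, hfd, ?_, ?_, rfl, ?_, ?_⟩
    · rw [clan_sign γ hbγ d, if_pos hfd]; exact hbd
    · refine ⟨Fin.lt_def.mpr (by omega), ?_, ?_⟩
      · rw [hfd]
        exact Fin.lt_def.mpr (by omega)
      · intro k hk1 hk2 hcon
        refine hFree k (Fin.lt_def.mp hk1) ?_ ⟨?_, ?_⟩
        · have := Fin.lt_def.mp hk2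
          omega
        · exact Fin.lt_def.mp hcon.1
        · have h2 := Fin.lt_def.mp hcon.2
          omega
    · show (if σπ (γ.1.1 h) = γ.1.1 h then b (γ.1.1 h) else false) = true
      rw [if_pos vJ]
      exact hbJ
    · intro x hx1 hx2
      show (if σπ x = x then b x else false) = γ.1.2 x
      by_cases e1 : x = h
      · rw [e1, if_neg (by rw [vh]; exact ne_dh), clan_sign γ hbγ h, if_neg ne_hJ.symm]
      · rw [vx x e1 hx1 hx2, clan_sign γ hbγ x]
  · intro r y hry
    change Rk σπ r y = _
    have hdiffZ : (Rk σπ r y : ℤ) - Rk γ.1.1 r y =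
        ∑ i ∈ ({h, γ.1.1 h, d} : Finset (Fin n)),
          (ind σπ r y i - ind γ.1.1 r y i) := by
      refine diff_eval σπ γ.1.1 _ ?_ r y
      intro i hi
      simp only [Finset.mem_insert, Finset.mem_singleton, not_or] at hi
      exact vx i hi.1 hi.2.1 hi.2.2
    rw [Finset.sum_insert (by simp [ne_hJ, ne_hd]),
      Finset.sum_insert (by simp [ne_Jd]), Finset.sum_singleton] at hdiffZ
    simp only [ind] at hdiffZ
    rw [vh, vJ, vd, hfd, hPJ] at hdiffZ
    simp only [Fin.lt_def] at hdiffZ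
    by_cases hREC : RECT γ.1.1 h d r y
    · rw [if_pos hREC]
      obtain ⟨g1, g2, g3, g4⟩ := hREC
      split_ifs at hdiffZ <;> omega
    · rw [if_neg hREC]
      rw [RECT] at hREC
      split_ifs at hdiffZ <;> omega


set_option maxHeartbeats 800000 in
lemma mk_move4 (γ : Clan n) (hbγ : baseClan γ = b) (h d : Fin n)
    (hbh : b h = false) (hbd : b d = true)
    (hoph : (h : ℕ) < (γ.1.1 h : ℕ)) (hcld : (γ.1.1 d : ℕ) < (d : ℕ))
    (hKJ : (γ.1.1 d : ℕ) < (γ.1.1 h : ℕ)) (hhK : (h : ℕ) < (γ.1.1 d : ℕ))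
    (hJd : (γ.1.1 h : ℕ) < (d : ℕ)) (hFree : Free γ.1.1 h d) :
    ∃ σ : Clan n, baseClan σ = b ∧ Move4 γ σ ∧
      ∀ r y : ℕ, r < y → Rk σ.1.1 r y = Rk γ.1.1 r y +
        (if RECT γ.1.1 h d r y then 1 else 0) := by
  classical
  have hP2 : ∀ i, γ.1.1 (γ.1.1 i) = i := clan_inv γ
  have hPJ : γ.1.1 (γ.1.1 h) = h := hP2 h
  have hPK : γ.1.1 (γ.1.1 d) = d := hP2 d
  have hPJ' : (γ.1.1 (γ.1.1 h) : ℕ) = (h : ℕ) := congrArg Fin.val hPJ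
  have hPK' : (γ.1.1 (γ.1.1 d) : ℕ) = (d : ℕ) := congrArg Fin.val hPK
  have ne_hJ : h ≠ γ.1.1 h := Fin.ne_of_val_ne (by omega)
  have ne_hK : h ≠ γ.1.1 d := Fin.ne_of_val_ne (by omega)
  have ne_hd : h ≠ d := Fin.ne_of_val_ne (by omega)
  have ne_JK : γ.1.1 h ≠ γ.1.1 d := Fin.ne_of_val_ne (by omega)
  have ne_Jd : γ.1.1 h ≠ d := Fin.ne_of_val_ne (by omega)
  have ne_Kd : γ.1.1 d ≠ d := Fin.ne_of_val_ne (by omega)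
  set σπ : Equiv.Perm (Fin n) :=
    Equiv.swap (γ.1.1 h) d * γ.1.1 * Equiv.swap (γ.1.1 h) d with hσπ
  have vh : σπ h = d := by
    rw [hσπ]
    simp only [Equiv.Perm.mul_apply]
    rw [Equiv.swap_apply_of_ne_of_ne ne_hJ ne_hd, Equiv.swap_apply_left]
  have vJ : σπ (γ.1.1 h) = γ.1.1 d := by
    rw [hσπ]
    simp only [Equiv.Perm.mul_apply]
    rw [Equiv.swap_apply_left,
      Equiv.swap_apply_of_ne_of_ne ne_JK.symm ne_Kd]
  have vK : σπ (γ.1.1 d) = γ.1.1 h := by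
    rw [hσπ]
    simp only [Equiv.Perm.mul_apply]
    rw [Equiv.swap_apply_of_ne_of_ne ne_JK.symm ne_Kd, hPK,
      Equiv.swap_apply_right]
  have vd : σπ d = h := by
    rw [hσπ]
    simp only [Equiv.Perm.mul_apply]
    rw [Equiv.swap_apply_right, hPJ,
      Equiv.swap_apply_of_ne_of_ne ne_hJ ne_hd]
  have vx : ∀ x, x ≠ h → x ≠ γ.1.1 h → x ≠ γ.1.1 d → x ≠ d → σπ x = γ.1.1 x := by
    intro x hx1 hx2 hx3 hx4
    rw [hσπ]
    simp only [Equiv.Perm.mul_apply]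
    rw [Equiv.swap_apply_of_ne_of_ne hx2 hx4,
      Equiv.swap_apply_of_ne_of_ne
        (fun e => hx1 (by rw [← hP2 x, e, hPJ]))
        (fun e => hx3 (by rw [← hP2 x, e]))]
  have hσ2 : ∀ i, σπ (σπ i) = i := by
    intro i
    by_cases e1 : i = h
    · rw [e1, vh, vd]
    by_cases e2 : i = γ.1.1 h
    · rw [e2, vJ, vK]
    by_cases e3 : i = γ.1.1 d
    · rw [e3, vK, vJ]
    by_cases e4 : i = d
    · rw [e4, vd, vh]
    rw [vx i e1 e2 e3 e4]
    have g1 : γ.1.1 i ≠ h := fun e => e2 (by rw [← hP2 i, e])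
    have g2 : γ.1.1 i ≠ γ.1.1 h := fun e => e1 (by rw [← hP2 i, e, hPJ])
    have g3 : γ.1.1 i ≠ γ.1.1 d := fun e => e4 (by rw [← hP2 i, e, hPK])
    have g4 : γ.1.1 i ≠ d := fun e => e3 (by rw [← hP2 i, e])
    rw [vx _ g1 g2 g3 g4, hP2]
  have hbJ : b (γ.1.1 h) = true := by
    refine (clan_compat γ hbγ (γ.1.1 h)).1 ?_
    rw [hPJ]
    exact Fin.lt_def.mpr (by omega)
  have hbK : b (γ.1.1 d) = false := by
    refine (clan_compat γ hbγ (γ.1.1 d)).2 ?_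
    rw [hPK]
    exact Fin.lt_def.mpr (by omega)
  refine ⟨⟨(σπ, fun i => if σπ i = i then b i else false),
    perm_involutive σπ hσ2, fun i hi => if_neg hi⟩, ?_, ?_, ?_⟩
  · apply baseClan_mk
    · intro i hop
      dsimp only at hop ⊢
      by_cases e1 : i = h
      · rw [e1]; exact hbh
      by_cases e2 : i = γ.1.1 h
      · exfalso
        rw [e2, vJ] at hop
        have := Fin.lt_def.mp hop
        omega
      by_cases e3 : i = γ.1.1 d
      · rw [e3]; exact hbK
      by_cases e4 : i = d
      · exfalso
        rw [e4, vd] at hop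
        have := Fin.lt_def.mp hop
        omega
      · rw [vx i e1 e2 e3 e4] at hop
        exact (clan_compat γ hbγ i).2 hop
    · intro i hcl
      dsimp only at hcl ⊢
      by_cases e1 : i = h
      · exfalso
        rw [e1, vh] at hcl
        have := Fin.lt_def.mp hcl
        omega
      by_cases e2 : i = γ.1.1 h
      · rw [e2]; exact hbJ
      by_cases e3 : i = γ.1.1 d
      · exfalso
        rw [e3, vK] at hcl
        have := Fin.lt_def.mp hcl
        omega
      by_cases e4 : i = d
      · rw [e4]; exact hbd
      · rw [vx i e1 e2 e3 e4] at hcl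
        exact (clan_compat γ hbγ i).1 hcl
    · intro i hfx
      dsimp only at hfx ⊢
      exact if_pos hfx
  · refine ⟨h, γ.1.1 d, Fin.lt_def.mpr hhK, Fin.lt_def.mpr hKJ, ?_, ?_, ?_, ?_⟩
    · rw [hPK]
      exact Fin.lt_def.mpr hJd
    · refine ⟨Fin.lt_def.mpr hhK, ?_, ?_⟩
      · rw [hPK]
        exact Fin.lt_def.mpr hJd
      · intro k hk1 hk2 hcon
        refine hFree k (Fin.lt_def.mp hk1) (Fin.lt_def.mp hk2) ⟨?_, ?_⟩
        · exact Fin.lt_def.mp hcon.1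
        · have h2 := Fin.lt_def.mp hcon.2
          omega
    · rw [hPK]
    · intro x
      show (if σπ x = x then b x else false) = γ.1.2 x
      by_cases e1 : x = h
      · rw [e1, if_neg (by rw [vh]; exact ne_hd.symm), clan_sign γ hbγ h,
          if_neg (fun e => absurd (congrArg Fin.val e) (by omega))]
      by_cases e2 : x = γ.1.1 h
      · rw [e2, if_neg (by rw [vJ]; exact ne_JK.symm), clan_sign γ hbγ (γ.1.1 h),
          if_neg (fun e => absurd (congrArg Fin.val e) (by omega))]
      by_cases e3 : x = γ.1.1 d
      · rw [e3, if_neg (by rw [vK]; exact ne_JK), clan_sign γ hbγ (γ.1.1 d),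
          if_neg (fun e => absurd (congrArg Fin.val e) (by omega))]
      by_cases e4 : x = d
      · rw [e4, if_neg (by rw [vd]; exact ne_hd), clan_sign γ hbγ d,
          if_neg (fun e => absurd (congrArg Fin.val e) (by omega))]
      · rw [vx x e1 e2 e3 e4, clan_sign γ hbγ x]
  · intro r y hry
    change Rk σπ r y = _
    have hdiffZ : (Rk σπ r y : ℤ) - Rk γ.1.1 r y =
        ∑ i ∈ ({h, γ.1.1 h, γ.1.1 d, d} : Finset (Fin n)),
          (ind σπ r y i - ind γ.1.1 r y i) := by
      refine diff_eval σπ γ.1.1 _ ?_ r y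
      intro i hi
      simp only [Finset.mem_insert, Finset.mem_singleton, not_or] at hi
      exact vx i hi.1 hi.2.1 hi.2.2.1 hi.2.2.2
    rw [Finset.sum_insert (by simp [ne_hJ, ne_hK, ne_hd]),
      Finset.sum_insert (by simp [ne_JK, ne_Jd]),
      Finset.sum_insert (by simp [ne_Kd]), Finset.sum_singleton] at hdiffZ
    simp only [ind] at hdiffZ
    rw [vh, vJ, vK, vd, hPJ, hPK] at hdiffZ
    simp only [Fin.lt_def] at hdiffZ
    have c1 : ((h : ℕ) < (d : ℕ)) = True := eq_true (by omega)
    have c2 : ((h : ℕ) < (γ.1.1 h : ℕ)) = True := eq_true (by omega)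
    have c3 : ((γ.1.1 h : ℕ) < (γ.1.1 d : ℕ)) = False := eq_false (by omega)
    have c4 : ((γ.1.1 h : ℕ) < (h : ℕ)) = False := eq_false (by omega)
    have c5 : ((γ.1.1 d : ℕ) < (γ.1.1 h : ℕ)) = True := eq_true (by omega)
    have c6 : ((γ.1.1 d : ℕ) < (d : ℕ)) = True := eq_true (by omega)
    have c7 : ((d : ℕ) < (h : ℕ)) = False := eq_false (by omega)
    have c8 : ((d : ℕ) < (γ.1.1 d : ℕ)) = False := eq_false (by omega)
    simp only [c1, c2, c3, c4, c5, c6, c7, c8, true_and, false_and,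
      if_false, if_true, lt_self_iff_false] at hdiffZ
    by_cases hREC : RECT γ.1.1 h d r y
    · rw [if_pos hREC]
      obtain ⟨g1, g2, g3, g4⟩ := hREC
      split_ifs at hdiffZ <;> omega
    · rw [if_neg hREC]
      rw [RECT] at hREC
      split_ifs at hdiffZ <;> omega

set_option maxHeartbeats 800000 in
lemma mk_move5 (γ : Clan n) (hbγ : baseClan γ = b) (h d : Fin n)
    (hbh : b h = false) (hbd : b d = true)
    (hoph : (h : ℕ) < (γ.1.1 h : ℕ)) (hcld : (γ.1.1 d : ℕ) < (d : ℕ))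
    (hJK : (γ.1.1 h : ℕ) < (γ.1.1 d : ℕ)) (hFree : Free γ.1.1 h d) :
    ∃ σ : Clan n, baseClan σ = b ∧ Move5 γ σ ∧
      ∀ r y : ℕ, r < y → Rk σ.1.1 r y = Rk γ.1.1 r y +
        (if RECT γ.1.1 h d r y then 1 else 0) := by
  classical
  have hP2 : ∀ i, γ.1.1 (γ.1.1 i) = i := clan_inv γ
  have hPJ : γ.1.1 (γ.1.1 h) = h := hP2 h
  have hPK : γ.1.1 (γ.1.1 d) = d := hP2 d
  have hPJ' : (γ.1.1 (γ.1.1 h) : ℕ) = (h : ℕ) := congrArg Fin.val hPJ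
  have hPK' : (γ.1.1 (γ.1.1 d) : ℕ) = (d : ℕ) := congrArg Fin.val hPK
  have ne_hJ : h ≠ γ.1.1 h := Fin.ne_of_val_ne (by omega)
  have ne_hK : h ≠ γ.1.1 d := Fin.ne_of_val_ne (by omega)
  have ne_hd : h ≠ d := Fin.ne_of_val_ne (by omega)
  have ne_JK : γ.1.1 h ≠ γ.1.1 d := Fin.ne_of_val_ne (by omega)
  have ne_Jd : γ.1.1 h ≠ d := Fin.ne_of_val_ne (by omega)
  have ne_Kd : γ.1.1 d ≠ d := Fin.ne_of_val_ne (by omega)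
  set σπ : Equiv.Perm (Fin n) :=
    γ.1.1 * Equiv.swap h (γ.1.1 h) * Equiv.swap (γ.1.1 d) d * Equiv.swap h d
    with hσπ
  have vh : σπ h = d := by
    rw [hσπ]
    simp only [Equiv.Perm.mul_apply]
    rw [Equiv.swap_apply_left, Equiv.swap_apply_right,
      Equiv.swap_apply_of_ne_of_ne ne_hK.symm ne_JK.symm, hPK]
  have vd : σπ d = h := by
    rw [hσπ]
    simp only [Equiv.Perm.mul_apply]
    rw [Equiv.swap_apply_right, Equiv.swap_apply_of_ne_of_ne ne_hK ne_hd,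
      Equiv.swap_apply_left, hPJ]
  have vJ : σπ (γ.1.1 h) = γ.1.1 h := by
    rw [hσπ]
    simp only [Equiv.Perm.mul_apply]
    rw [Equiv.swap_apply_of_ne_of_ne ne_hJ.symm ne_Jd,
      Equiv.swap_apply_of_ne_of_ne ne_JK ne_Jd, Equiv.swap_apply_right]
  have vK : σπ (γ.1.1 d) = γ.1.1 d := by
    rw [hσπ]
    simp only [Equiv.Perm.mul_apply]
    rw [Equiv.swap_apply_of_ne_of_ne ne_hK.symm ne_Kd, Equiv.swap_apply_left,
      Equiv.swap_apply_of_ne_of_ne ne_hd.symm ne_Jd.symm]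
  have vx : ∀ x, x ≠ h → x ≠ γ.1.1 h → x ≠ γ.1.1 d → x ≠ d → σπ x = γ.1.1 x := by
    intro x hx1 hx2 hx3 hx4
    rw [hσπ]
    simp only [Equiv.Perm.mul_apply]
    rw [Equiv.swap_apply_of_ne_of_ne hx1 hx4,
      Equiv.swap_apply_of_ne_of_ne hx3 hx4,
      Equiv.swap_apply_of_ne_of_ne hx1 hx2]
  have hσ2 : ∀ i, σπ (σπ i) = i := by
    intro i
    by_cases e1 : i = h
    · rw [e1, vh, vd]
    by_cases e2 : i = γ.1.1 h
    · rw [e2, vJ, vJ]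
    by_cases e3 : i = γ.1.1 d
    · rw [e3, vK, vK]
    by_cases e4 : i = d
    · rw [e4, vd, vh]
    rw [vx i e1 e2 e3 e4]
    have g1 : γ.1.1 i ≠ h := fun e => e2 (by rw [← hP2 i, e])
    have g2 : γ.1.1 i ≠ γ.1.1 h := fun e => e1 (by rw [← hP2 i, e, hPJ])
    have g3 : γ.1.1 i ≠ γ.1.1 d := fun e => e4 (by rw [← hP2 i, e, hPK])
    have g4 : γ.1.1 i ≠ d := fun e => e3 (by rw [← hP2 i, e])
    rw [vx _ g1 g2 g3 g4, hP2]
  have hbJ : b (γ.1.1 h) = true := by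
    refine (clan_compat γ hbγ (γ.1.1 h)).1 ?_
    rw [hPJ]
    exact Fin.lt_def.mpr (by omega)
  have hbK : b (γ.1.1 d) = false := by
    refine (clan_compat γ hbγ (γ.1.1 d)).2 ?_
    rw [hPK]
    exact Fin.lt_def.mpr (by omega)
  refine ⟨⟨(σπ, fun i => if σπ i = i then b i else false),
    perm_involutive σπ hσ2, fun i hi => if_neg hi⟩, ?_, ?_, ?_⟩
  · apply baseClan_mk
    · intro i hop
      dsimp only at hop ⊢
      by_cases e1 : i = h
      · rw [e1]; exact hbh
      by_cases e2 : i = γ.1.1 h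
      · exfalso; rw [e2, vJ] at hop; exact lt_irrefl _ hop
      by_cases e3 : i = γ.1.1 d
      · exfalso; rw [e3, vK] at hop; exact lt_irrefl _ hop
      by_cases e4 : i = d
      · exfalso
        rw [e4, vd] at hop
        have := Fin.lt_def.mp hop
        omega
      · rw [vx i e1 e2 e3 e4] at hop
        exact (clan_compat γ hbγ i).2 hop
    · intro i hcl
      dsimp only at hcl ⊢
      by_cases e1 : i = h
      · exfalso
        rw [e1, vh] at hcl
        have := Fin.lt_def.mp hcl
        omega
      by_cases e2 : i = γ.1.1 h
      · exfalso; rw [e2, vJ] at hcl; exact lt_irrefl _ hcl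
      by_cases e3 : i = γ.1.1 d
      · exfalso; rw [e3, vK] at hcl; exact lt_irrefl _ hcl
      by_cases e4 : i = d
      · rw [e4]; exact hbd
      · rw [vx i e1 e2 e3 e4] at hcl
        exact (clan_compat γ hbγ i).1 hcl
    · intro i hfx
      dsimp only at hfx ⊢
      exact if_pos hfx
  · refine ⟨h, γ.1.1 d, Fin.lt_def.mpr hoph, Fin.lt_def.mpr hJK, ?_, ?_, ?_, ?_, ?_, ?_⟩
    · rw [hPK]
      exact Fin.lt_def.mpr hcld
    · refine ⟨Fin.lt_def.mpr (by omega), ?_, ?_⟩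
      · rw [hPK]
        exact Fin.lt_def.mpr (by omega)
      · intro k hk1 hk2 hcon
        refine hFree k (Fin.lt_def.mp hk1) (Fin.lt_def.mp hk2) ⟨?_, ?_⟩
        · exact Fin.lt_def.mp hcon.1
        · have h2 := Fin.lt_def.mp hcon.2
          omega
    · rw [hPK]
    · show (if σπ (γ.1.1 h) = γ.1.1 h then b (γ.1.1 h) else false) = true
      rw [if_pos vJ]
      exact hbJ
    · show (if σπ (γ.1.1 d) = γ.1.1 d then b (γ.1.1 d) else false) = false
      rw [if_pos vK]
      exact hbK
    · intro x hx2 hx3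
      show (if σπ x = x then b x else false) = γ.1.2 x
      by_cases e1 : x = h
      · rw [e1, if_neg (by rw [vh]; exact ne_hd.symm), clan_sign γ hbγ h,
          if_neg (fun e => absurd (congrArg Fin.val e) (by omega))]
      by_cases e4 : x = d
      · rw [e4, if_neg (by rw [vd]; exact ne_hd), clan_sign γ hbγ d,
          if_neg (fun e => absurd (congrArg Fin.val e) (by omega))]
      · rw [vx x e1 hx2 hx3 e4, clan_sign γ hbγ x]
  · intro r y hry
    change Rk σπ r y = _
    have hdiffZ : (Rk σπ r y : ℤ) - Rk γ.1.1 r y =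
        ∑ i ∈ ({h, γ.1.1 h, γ.1.1 d, d} : Finset (Fin n)),
          (ind σπ r y i - ind γ.1.1 r y i) := by
      refine diff_eval σπ γ.1.1 _ ?_ r y
      intro i hi
      simp only [Finset.mem_insert, Finset.mem_singleton, not_or] at hi
      exact vx i hi.1 hi.2.1 hi.2.2.1 hi.2.2.2
    rw [Finset.sum_insert (by simp [ne_hJ, ne_hK, ne_hd]),
      Finset.sum_insert (by simp [ne_JK, ne_Jd]),
      Finset.sum_insert (by simp [ne_Kd]), Finset.sum_singleton] at hdiffZ
    simp only [ind] at hdiffZ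
    rw [vh, vJ, vK, vd, hPJ, hPK] at hdiffZ
    simp only [Fin.lt_def] at hdiffZ
    have c1 : ((h : ℕ) < (d : ℕ)) = True := eq_true (by omega)
    have c2 : ((h : ℕ) < (γ.1.1 h : ℕ)) = True := eq_true (by omega)
    have c4 : ((γ.1.1 h : ℕ) < (h : ℕ)) = False := eq_false (by omega)
    have c6 : ((γ.1.1 d : ℕ) < (d : ℕ)) = True := eq_true (by omega)
    have c7 : ((d : ℕ) < (h : ℕ)) = False := eq_false (by omega)
    have c8 : ((d : ℕ) < (γ.1.1 d : ℕ)) = False := eq_false (by omega)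
    simp only [c1, c2, c4, c6, c7, c8, true_and, false_and,
      if_false, if_true, lt_self_iff_false] at hdiffZ
    by_cases hREC : RECT γ.1.1 h d r y
    · rw [if_pos hREC]
      obtain ⟨g1, g2, g3, g4⟩ := hREC
      split_ifs at hdiffZ <;> omega
    · rw [if_neg hREC]
      rw [RECT] at hREC
      split_ifs at hdiffZ <;> omega


end Clans


open Finset

section Glue
variable {p q : ℕ} (b : Fin (p + q) → Bool)
  (hbt : (Finset.univ.filter fun i => b i = true).card = p)
  (hbf : (Finset.univ.filter fun i => b i = false).card = q)

lemma minusPos_b (k : Fin q) : b (minusPos b hbf k) = false := by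
  have h := ((Finset.univ.filter fun i => b i = false).orderIsoOfFin hbf k).2
  rw [Finset.mem_filter] at h
  exact h.2

lemma plusPos_b (l : Fin p) : b (plusPos b hbt l) = true := by
  have h := ((Finset.univ.filter fun i => b i = true).orderIsoOfFin hbt l).2
  rw [Finset.mem_filter] at h
  exact h.2

lemma minusPos_le_iff (k k' : Fin q) :
    minusPos b hbf k ≤ minusPos b hbf k' ↔ k ≤ k' := by
  unfold minusPos
  rw [Subtype.coe_le_coe]
  exact OrderIso.le_iff_le _

lemma plusPos_le_iff (l l' : Fin p) :
    plusPos b hbt l ≤ plusPos b hbt l' ↔ l ≤ l' := by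
  unfold plusPos
  rw [Subtype.coe_le_coe]
  exact OrderIso.le_iff_le _

lemma minusPos_index (i : Fin (p + q)) (hi : b i = false) :
    ∃ k : Fin q, minusPos b hbf k = i := by
  refine ⟨((Finset.univ.filter fun i => b i = false).orderIsoOfFin hbf).symm
    ⟨i, by rw [Finset.mem_filter]; exact ⟨Finset.mem_univ _, hi⟩⟩, ?_⟩
  unfold minusPos
  rw [OrderIso.apply_symm_apply]

lemma plusPos_index (i : Fin (p + q)) (hi : b i = true) :
    ∃ l : Fin p, plusPos b hbt l = i := by
  refine ⟨((Finset.univ.filter fun i => b i = true).orderIsoOfFin hbt).symm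
    ⟨i, by rw [Finset.mem_filter]; exact ⟨Finset.mem_univ _, hi⟩⟩, ?_⟩
  unfold plusPos
  rw [OrderIso.apply_symm_apply]

lemma sect_opener (γ : Sect b) (i : Fin (p + q)) (hbi : b i = false)
    (hne : γ.1.1.1 i ≠ i) : i < γ.1.1.1 i := by
  rcases lt_trichotomy i (γ.1.1.1 i) with hh | hh | hh
  · exact hh
  · exact absurd hh.symm hne
  · have := (clan_compat γ.1 γ.2 i).1 hh
    rw [this] at hbi
    exact Bool.noConfusion hbi

lemma sectRank_eq (γ : Sect b) (k : Fin q) (l : Fin p) :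
    sectRank b hbt hbf γ k l =
      Rk γ.1.1.1 (minusPos b hbf k : ℕ) (plusPos b hbt l : ℕ) := by
  classical
  have hinv := clan_inv γ.1
  have hcompat := clan_compat γ.1 γ.2
  unfold sectRank Rk
  refine Finset.card_bij' (fun z _ => minusPos b hbf z.1)
    (fun i hi => (((Finset.univ.filter fun i => b i = false).orderIsoOfFin hbf).symm
        ⟨i, by
          rw [Finset.mem_filter]
          rw [Finset.mem_filter] at hi
          exact ⟨Finset.mem_univ _, by
            by_contra hcon
            have hbi : b i = true := by
              cases hb : b i
              · exact absurd hb hcon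
              · rfl
            exact absurd ((hcompat i).2 hi.2.1) (by rw [hbi]; simp)⟩⟩,
      ((Finset.univ.filter fun i => b i = true).orderIsoOfFin hbt).symm
        ⟨γ.1.1.1 i, by
          rw [Finset.mem_filter]
          rw [Finset.mem_filter] at hi
          refine ⟨Finset.mem_univ _, ?_⟩
          have hcl : γ.1.1.1 (γ.1.1.1 i) < γ.1.1.1 i := by
            rw [hinv i]; exact hi.2.1
          exact (hcompat (γ.1.1.1 i)).1 hcl⟩))
    ?_ ?_ ?_ ?_
  · -- forward membership
    intro z hz
    rw [Finset.mem_filter] at hz ⊢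
    obtain ⟨-, hmatch, hzk, hlz⟩ := hz
    refine ⟨Finset.mem_univ _, ?_, ?_, ?_⟩
    · apply sect_opener b γ _ (minusPos_b b hbf z.1)
      rw [hmatch]
      intro e
      have h1 := minusPos_b b hbf z.1
      rw [← e, plusPos_b b hbt z.2] at h1
      exact Bool.noConfusion h1
    · exact (minusPos_le_iff b hbf z.1 k).mpr hzk
    · rw [hmatch]
      exact (plusPos_le_iff b hbt l z.2).mpr hlz
  · -- backward membership
    intro i hi
    rw [Finset.mem_filter] at hi ⊢
    obtain ⟨-, hop, hik, hli⟩ := hi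
    refine ⟨Finset.mem_univ _, ?_, ?_, ?_⟩
    · show γ.1.1.1 (minusPos b hbf _) = plusPos b hbt _
      unfold minusPos plusPos
      rw [OrderIso.apply_symm_apply, OrderIso.apply_symm_apply]
    · rw [← minusPos_le_iff b hbf]
      show (minusPos b hbf _ : ℕ) ≤ (minusPos b hbf k : ℕ)
      unfold minusPos
      rw [OrderIso.apply_symm_apply]
      exact hik
    · rw [← plusPos_le_iff b hbt]
      show (plusPos b hbt l : ℕ) ≤ (plusPos b hbt _ : ℕ)
      unfold plusPos
      rw [OrderIso.apply_symm_apply]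
      exact hli
  · -- left inverse
    intro z hz
    rw [Finset.mem_filter] at hz
    obtain ⟨-, hmatch, -, -⟩ := hz
    refine Prod.ext ?_ ?_
    · rw [OrderIso.symm_apply_eq]
      exact Subtype.ext rfl
    · rw [OrderIso.symm_apply_eq]
      exact Subtype.ext hmatch
  · -- right inverse
    intro i hi
    show (minusPos b hbf _ : Fin (p + q)) = i
    unfold minusPos
    rw [OrderIso.apply_symm_apply]

lemma sectLe_iff (γ τ : Sect b) :
    sectLe b hbt hbf γ τ ↔
      ∀ a y : ℕ, a < y → Rk γ.1.1.1 a y ≤ Rk τ.1.1.1 a y := by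
  classical
  constructor
  · intro hle a y hay
    by_cases h1 : ∃ i : Fin (p + q), b i = false ∧ (i : ℕ) ≤ a
    · by_cases h2 : ∃ j : Fin (p + q), b j = true ∧ y ≤ (j : ℕ)
      · obtain ⟨i₀, hbi₀, hi₀⟩ := h1
        obtain ⟨j₀, hbj₀, hj₀⟩ := h2
        obtain ⟨k₀, hk₀⟩ := minusPos_index b hbf i₀ hbi₀
        obtain ⟨l₀, hl₀⟩ := plusPos_index b hbt j₀ hbj₀
        set Kset := Finset.univ.filter
          (fun k' : Fin q => (minusPos b hbf k' : ℕ) ≤ a) with hKset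
        set Lset := Finset.univ.filter
          (fun l' : Fin p => y ≤ (plusPos b hbt l' : ℕ)) with hLset
        have hKne : Kset.Nonempty := ⟨k₀, Finset.mem_filter.mpr
          ⟨Finset.mem_univ _, by rw [hk₀]; exact hi₀⟩⟩
        have hLne : Lset.Nonempty := ⟨l₀, Finset.mem_filter.mpr
          ⟨Finset.mem_univ _, by rw [hl₀]; exact hj₀⟩⟩
        set k := Kset.max' hKne with hk
        set l := Lset.min' hLne with hl
        have hkmem := Finset.mem_filter.mp (Kset.max'_mem hKne)
        have hlmem := Finset.mem_filter.mp (Lset.min'_mem hLne)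
        have key1 : ∀ i : Fin (p + q), b i = false →
            ((i : ℕ) ≤ a ↔ (i : ℕ) ≤ (minusPos b hbf k : ℕ)) := by
          intro i hbi
          obtain ⟨ki, hki⟩ := minusPos_index b hbf i hbi
          constructor
          · intro hle'
            have hmem : ki ∈ Kset := Finset.mem_filter.mpr
              ⟨Finset.mem_univ _, by rw [hki]; exact hle'⟩
            have := Kset.le_max' ki hmem
            have := (minusPos_le_iff b hbf ki k).mpr this
            rw [hki] at this
            exact this
          · intro hle'
            exact le_trans hle' hkmem.2
        have key2 : ∀ j : Fin (p + q), b j = true →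
            (y ≤ (j : ℕ) ↔ (plusPos b hbt l : ℕ) ≤ (j : ℕ)) := by
          intro j hbj
          obtain ⟨lj, hlj⟩ := plusPos_index b hbt j hbj
          constructor
          · intro hle'
            have hmem : lj ∈ Lset := Finset.mem_filter.mpr
              ⟨Finset.mem_univ _, by rw [hlj]; exact hle'⟩
            have := Lset.min'_le lj hmem
            have := (plusPos_le_iff b hbt l lj).mpr this
            rw [hlj] at this
            exact this
          · intro hle'
            exact le_trans hlmem.2 hle'
        have hbox : minusPos b hbf k < plusPos b hbt l := by
          rw [Fin.lt_def]
          have g1 : (minusPos b hbf k : ℕ) ≤ a := hkmem.2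
          have g2 : y ≤ (plusPos b hbt l : ℕ) := hlmem.2
          omega
        have hRkfix : ∀ σ : Sect b, Rk σ.1.1.1 a y =
            Rk σ.1.1.1 (minusPos b hbf k : ℕ) (plusPos b hbt l : ℕ) := by
          intro σ
          unfold Rk
          congr 1
          ext i
          simp only [Finset.mem_filter, Finset.mem_univ, true_and]
          constructor
          · rintro ⟨g1, g2, g3⟩
            have hbi : b i = false := (clan_compat σ.1 σ.2 i).2 g1
            have hbpi : b (σ.1.1.1 i) = true := by
              refine (clan_compat σ.1 σ.2 (σ.1.1.1 i)).1 ?_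
              rw [clan_inv σ.1 i]
              exact g1
            exact ⟨g1, (key1 i hbi).mp g2, (key2 _ hbpi).mp g3⟩
          · rintro ⟨g1, g2, g3⟩
            have hbi : b i = false := (clan_compat σ.1 σ.2 i).2 g1
            have hbpi : b (σ.1.1.1 i) = true := by
              refine (clan_compat σ.1 σ.2 (σ.1.1.1 i)).1 ?_
              rw [clan_inv σ.1 i]
              exact g1
            exact ⟨g1, (key1 i hbi).mpr g2, (key2 _ hbpi).mpr g3⟩
        rw [hRkfix γ, hRkfix τ, ← sectRank_eq b hbt hbf γ k l,
          ← sectRank_eq b hbt hbf τ k l]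
        exact hle k l hbox
      · -- no plus position ≥ y : left side is 0
        push_neg at h2
        have : Rk γ.1.1.1 a y = 0 := by
          rw [Rk, Finset.card_eq_zero]
          ext i
          simp only [Finset.mem_filter, Finset.mem_univ, true_and,
            Finset.notMem_empty, iff_false]
          rintro ⟨g1, g2, g3⟩
          have hbpi : b (γ.1.1.1 i) = true := by
            refine (clan_compat γ.1 γ.2 (γ.1.1.1 i)).1 ?_
            rw [clan_inv γ.1 i]
            exact g1
          exact absurd g3 (not_le.mpr (h2 _ hbpi))
        rw [this]
        exact Nat.zero_le _
    · push_neg at h1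
      have : Rk γ.1.1.1 a y = 0 := by
        rw [Rk, Finset.card_eq_zero]
        ext i
        simp only [Finset.mem_filter, Finset.mem_univ, true_and,
          Finset.notMem_empty, iff_false]
        rintro ⟨g1, g2, g3⟩
        have hbi : b i = false := (clan_compat γ.1 γ.2 i).2 g1
        exact absurd g2 (not_le.mpr (h1 i hbi))
      rw [this]
      exact Nat.zero_le _
  · intro hRk k l hbox
    rw [sectRank_eq b hbt hbf γ k l, sectRank_eq b hbt hbf τ k l]
    exact hRk _ _ (Fin.lt_def.mp hbox)

end Glue

end SectCover

open SectCover in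
/-- If γ ⋖ τ is a covering relation of the Bruhat order restricted to the
sect C_{p,q}^λ (equivalently, of the rank-tableau order on rook placements of
shape λ), then the base clans of γ and τ agree, and τ is obtained from γ by
one of the five pattern replacements (−+ → 11; −11 → 1−1; 11+ → 1+1;
1212 → 1221; 1122 → 1+−1) applied at a free rise. -/
theorem sect_covering_relations (p q : ℕ) (b : Fin (p + q) → Bool)
    (hbt : (Finset.univ.filter fun i => b i = true).card = p)
    (hbf : (Finset.univ.filter fun i => b i = false).card = q)
    (γ τ : Sect b)
    (hlt : sectLe b hbt hbf γ τ ∧ γ ≠ τ)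
    (hcov : ¬ ∃ σ : Sect b, (sectLe b hbt hbf γ σ ∧ γ ≠ σ) ∧
      (sectLe b hbt hbf σ τ ∧ σ ≠ τ)) :
    baseClan γ.1 = baseClan τ.1 ∧
      (Move1 γ.1 τ.1 ∨ Move2 γ.1 τ.1 ∨ Move3 γ.1 τ.1 ∨ Move4 γ.1 τ.1 ∨
        Move5 γ.1 τ.1) := by
  classical
  obtain ⟨hle', hne'⟩ := hlt
  have hP2 := clan_inv γ.1
  have hQ2 := clan_inv τ.1
  have hPb := clan_compat γ.1 γ.2
  have hQb := clan_compat τ.1 τ.2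
  have hle : ∀ a y : ℕ, a < y → Rk γ.1.1.1 a y ≤ Rk τ.1.1.1 a y :=
    (sectLe_iff b hbt hbf γ τ).mp hle'
  have hneP : γ.1.1.1 ≠ τ.1.1.1 := by
    intro hPQ
    apply hne'
    apply Subtype.ext
    apply Subtype.ext
    have hsg : γ.1.1.2 = τ.1.1.2 := by
      funext i
      rw [clan_sign γ.1 γ.2 i, clan_sign τ.1 τ.2 i, hPQ]
    exact Prod.ext hPQ hsg
  obtain ⟨a, c, hVac, hac, F1, F2⟩ := C1 γ.1.1.1 τ.1.1.1 b hP2 hQ2 hPb hQb hle hneP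
  obtain ⟨h, d, hV, hGood, hFree⟩ := C3 γ.1.1.1 τ.1.1.1 b hP2 hPb
    (C2 γ.1.1.1 τ.1.1.1 b hP2 hPb hle a c hVac hac F1 F2)
  obtain ⟨hbh, hbd, hPhd, hhPd⟩ := hV
  have hPh_ge : (h : ℕ) ≤ (γ.1.1.1 h : ℕ) := by
    rcases lt_or_ge (γ.1.1.1 h) h with hh | hh
    · rw [(hPb h).1 hh] at hbh; exact Bool.noConfusion hbh
    · exact hh
  have hPd_le : (γ.1.1.1 d : ℕ) ≤ (d : ℕ) := by
    rcases lt_or_ge d (γ.1.1.1 d) with hh | hh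
    · rw [(hPb d).2 hh] at hbd; exact Bool.noConfusion hbd
    · exact hh
  have hmv : ∃ σc : Clan (p + q), baseClan σc = b ∧
      (Move1 γ.1 σc ∨ Move2 γ.1 σc ∨ Move3 γ.1 σc ∨ Move4 γ.1 σc ∨ Move5 γ.1 σc) ∧
      ∀ r y : ℕ, r < y → Rk σc.1.1 r y = Rk γ.1.1.1 r y +
        (if RECT γ.1.1.1 h d r y then 1 else 0) := by
    rcases eq_or_lt_of_le hPh_ge with hfh | hoph
    · have hfh' : γ.1.1.1 h = h := Fin.ext hfh.symm
      rcases eq_or_lt_of_le hPd_le with hfd | hcld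
      · have hfd' : γ.1.1.1 d = d := Fin.ext hfd
        obtain ⟨σc, h1, h2, h3⟩ := mk_move1 γ.1 γ.2 h d hbh hbd hfh' hfd'
          (by omega) hFree
        exact ⟨σc, h1, Or.inl h2, h3⟩
      · obtain ⟨σc, h1, h2, h3⟩ := mk_move2 γ.1 γ.2 h d hbh hbd hfh' hcld hhPd hFree
        exact ⟨σc, h1, Or.inr (Or.inl h2), h3⟩
    · rcases eq_or_lt_of_le hPd_le with hfd | hcld
      · have hfd' : γ.1.1.1 d = d := Fin.ext hfd
        obtain ⟨σc, h1, h2, h3⟩ := mk_move3 γ.1 γ.2 h d hbh hbd hoph hfd' hPhd hFree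
        exact ⟨σc, h1, Or.inr (Or.inr (Or.inl h2)), h3⟩
      · rcases lt_trichotomy (γ.1.1.1 d : ℕ) (γ.1.1.1 h : ℕ) with hKJ | heq | hJK
        · obtain ⟨σc, h1, h2, h3⟩ := mk_move4 γ.1 γ.2 h d hbh hbd hoph hcld hKJ
            hhPd hPhd hFree
          exact ⟨σc, h1, Or.inr (Or.inr (Or.inr (Or.inl h2))), h3⟩
        · exfalso
          have he1 : γ.1.1.1 d = γ.1.1.1 h := Fin.ext heq
          have he2 := congrArg γ.1.1.1 he1
          rw [hP2 d, hP2 h] at he2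
          have := congrArg Fin.val he2
          omega
        · obtain ⟨σc, h1, h2, h3⟩ := mk_move5 γ.1 γ.2 h d hbh hbd hoph hcld hJK hFree
          exact ⟨σc, h1, Or.inr (Or.inr (Or.inr (Or.inr h2))), h3⟩
  obtain ⟨σc, hbσ, hmoves, hRkσ⟩ := hmv
  have hle1 : sectLe b hbt hbf γ ⟨σc, hbσ⟩ := by
    refine (sectLe_iff b hbt hbf _ _).mpr ?_
    intro a' y' hay
    rw [hRkσ a' y' hay]
    exact Nat.le_add_right _ _
  have hle2 : sectLe b hbt hbf ⟨σc, hbσ⟩ τ := by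
    refine (sectLe_iff b hbt hbf _ _).mpr ?_
    intro a' y' hay
    rw [hRkσ a' y' hay]
    by_cases hR : RECT γ.1.1.1 h d a' y'
    · rw [if_pos hR]
      have := hGood a' y' hay hR
      omega
    · rw [if_neg hR, Nat.add_zero]
      exact hle a' y' hay
  have hne1 : γ ≠ (⟨σc, hbσ⟩ : Sect b) := by
    intro he
    have hperm : γ.1.1.1 = σc.1.1 := by rw [he]
    have h1 := hRkσ (h : ℕ) (d : ℕ) (by omega)
    rw [← hperm] at h1
    rw [if_pos ⟨le_refl _, hhPd, hPhd, le_refl _⟩] at h1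
    omega
  by_cases hστ : (⟨σc, hbσ⟩ : Sect b) = τ
  · have hc : σc = τ.1 := congrArg Subtype.val hστ
    rw [hc] at hmoves
    exact ⟨γ.2.trans τ.2.symm, hmoves⟩
  · exact absurd ⟨⟨σc, hbσ⟩, ⟨hle1, hne1⟩, hle2, hστ⟩ hcov
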